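/- arXiv:math/0605438 — 2 statements merged into one kernel-verified Lean document; each statement's English description precedes it below -/
import Mathlib

section
/- Let (𝓔ₙ⁰)_{n∈ℕ} satisfy hypotheses A₁ and A₃ with 𝓖(𝓔₀⁰) edgeless, let (Mₙ)_{n≥1} satisfy hypotheses B₁, B₂, B₃ and B₄, and let Ψ = lim Ψₙ and g = lim gₙ. If F is a compact g-invariant subset of M such that Ψ(F) = M, then F = M. -/
open Set Function MeasureTheory Topology Filter

noncomputable section

variable {M : Type*}

section Defs
variable [TopologicalSpace M]

/-- A rectangle of `M`: a subset homeomorphic to the closed unit ball of `ℝ^d`. -/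
def IsRectangle (d : ℕ) (X : Set M) : Prop :=
  Nonempty (X ≃ₜ (Metric.closedBall (0 : EuclideanSpace ℝ (Fin d)) 1 :
    Set (EuclideanSpace ℝ (Fin d))))

/-- A collection of rectangles: a finite family of pairwise disjoint rectangles. -/
def IsRectCollection (d : ℕ) (𝓔 : Set (Set M)) : Prop :=
  𝓔.Finite ∧ (∀ X ∈ 𝓔, IsRectangle d X) ∧ 𝓔.Pairwise Disjoint

/-- The union `E` of the rectangles of a collection `𝓔`. -/
def collUnion (𝓔 : Set (Set M)) : Set M := ⋃₀ 𝓔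

/-- The collection `𝓔ⁿ = ⋃_{|k| ≤ n} R^k(𝓔)`. -/
def iterColl (R : M ≃ₜ M) (𝓔 : Set (Set M)) (n : ℕ) : Set (Set M) :=
  {Y | ∃ k : ℤ, |k| ≤ (n : ℤ) ∧ ∃ X ∈ 𝓔, Y = (R.toEquiv ^ k) '' X}

/-- `𝓔` is `p` times iterable. -/
def IterableColl (R : M ≃ₜ M) (𝓔 : Set (Set M)) (p : ℕ) : Prop :=
  ∀ X ∈ 𝓔, ∀ X' ∈ 𝓔, ∀ k l : ℤ, |k| ≤ (p : ℤ) → |l| ≤ (p : ℤ) →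
    Disjoint ((R.toEquiv ^ k) '' X) ((R.toEquiv ^ l) '' X') ∨
      (R.toEquiv ^ k) '' X = (R.toEquiv ^ l) '' X'

/-- The oriented graph `𝓖(𝓔)` (vertices the elements of `𝓔`, an edge from `X` to `R(X)`)
has no cycle. -/
def HasNoCycle (R : M ≃ₜ M) (𝓔 : Set (Set M)) : Prop :=
  ¬ ∃ (X : Set M) (p : ℕ), X ∈ 𝓔 ∧ 1 ≤ p ∧
      (∀ i : ℕ, i ≤ p → (R.toEquiv ^ (i : ℤ)) '' X ∈ 𝓔) ∧ (R.toEquiv ^ (p : ℤ)) '' X = X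

/-- The oriented graph `𝓖(𝓔)` has no edge. -/
def EdgelessGraph (R : M ≃ₜ M) (𝓔 : Set (Set M)) : Prop :=
  ∀ X ∈ 𝓔, (R : M → M) '' X ∉ 𝓔

/-- `𝓕` refines `𝓔`. -/
def Refines (𝓕 𝓔 : Set (Set M)) : Prop :=
  (∀ X ∈ 𝓔, ∃ Y ∈ 𝓕, Y ⊆ X) ∧
    ∀ X ∈ 𝓔, ∀ Y ∈ 𝓕, Disjoint X Y ∨ Y ⊆ interior X

/-- `𝓕` is compatible with `𝓔` for `p` iterates. -/
def CompatibleFor (R : M ≃ₜ M) (𝓕 𝓔 : Set (Set M)) (p : ℕ) : Prop :=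
  collUnion 𝓕 ⊆ collUnion 𝓔 ∧
    ∀ k : ℤ, |k| ≤ 2 * (p : ℤ) + 1 →
      (R.toEquiv ^ k) '' collUnion 𝓕 ∩ collUnion 𝓔 ⊆ collUnion 𝓕

/-- Hypothesis A₁. -/
def HypA1 (R : M ≃ₜ M) (𝓔 : ℕ → Set (Set M)) : Prop :=
  (∀ n, IterableColl R (𝓔 n) (n + 1) ∧ HasNoCycle R (iterColl R (𝓔 n) n)) ∧
  (∀ m n, m < n → Refines (iterColl R (𝓔 n) (n + 1)) (iterColl R (𝓔 m) (m + 1))) ∧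
  (∀ n, CompatibleFor R (𝓔 (n + 1)) (𝓔 n) (n + 1))

/-- Hypothesis A₂ (no isolated point). -/
def HypA2 (𝓔 : ℕ → Set (Set M)) : Prop :=
  ∀ n, ∀ X ∈ 𝓔 n, ∃ Y ∈ 𝓔 (n + 1), ∃ Z ∈ 𝓔 (n + 1), Y ≠ Z ∧ Y ⊆ X ∧ Z ⊆ X

/-- The set `K = ⋂ₙ Eₙ⁰`. -/
def limitK (𝓔 : ℕ → Set (Set M)) : Set M := ⋂ n, collUnion (𝓔 n)

/-- `Ψₙ = Mₙ ∘ ⋯ ∘ M₁`, `Ψ₀ = id`. -/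
def Psi (Mseq : ℕ → M ≃ₜ M) : ℕ → M ≃ₜ M
  | 0 => Homeomorph.refl M
  | n + 1 => (Psi Mseq n).trans (Mseq (n + 1))

/-- `gₙ = Ψₙ⁻¹ ∘ R ∘ Ψₙ`. -/
def gSeq (R : M ≃ₜ M) (Mseq : ℕ → M ≃ₜ M) (n : ℕ) : M ≃ₜ M :=
  ((Psi Mseq n).trans R).trans (Psi Mseq n).symm

/-- The support of a homeomorphism. -/
def homeoSupport (f : M ≃ₜ M) : Set M := closure {x | f x ≠ x}

/-- Hypothesis B₁ (support). -/
def HypB1 (R : M ≃ₜ M) (𝓔 : ℕ → Set (Set M)) (Mseq : ℕ → M ≃ₜ M) : Prop :=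
  ∀ n : ℕ, homeoSupport (Mseq (n + 1)) ⊆ collUnion (iterColl R (𝓔 n) n)

/-- Hypothesis B₂ (commutation). -/
def HypB2 (R : M ≃ₜ M) (𝓔 : ℕ → Set (Set M)) (Mseq : ℕ → M ≃ₜ M) : Prop :=
  ∀ n : ℕ, ∀ X ∈ iterColl R (𝓔 n) n, (R : M → M) '' X ∈ iterColl R (𝓔 n) n →
    ∀ x ∈ X, Mseq (n + 1) (R x) = R (Mseq (n + 1) x)

end Defs

section MetricDefs
variable [MetricSpace M]

/-- Hypothesis A₃ (decay of the collections of rectangles). -/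
def HypA3 (R : M ≃ₜ M) (𝓔 : ℕ → Set (Set M)) : Prop :=
  ∀ ε : ℝ, 0 < ε → ∃ N : ℕ, ∀ n ≥ N, ∀ X ∈ iterColl R (𝓔 n) n, Metric.diam X ≤ ε

/-- Hypothesis B₃ (convergence). -/
def HypB3 (R : M ≃ₜ M) (𝓔 : ℕ → Set (Set M)) (Mseq : ℕ → M ≃ₜ M) : Prop :=
  ∀ ε : ℝ, 0 < ε → ∃ N : ℕ, ∀ n ≥ N,
    ∀ X ∈ iterColl R (𝓔 (n + 1)) (n + 2) \ iterColl R (𝓔 (n + 1)) n,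
      Metric.diam ((Psi Mseq n) ⁻¹' X) ≤ ε

/-- Hypothesis B₄ (fibres are thin): the internal radius of `Ψₙ⁻¹(Eₙ⁰)` tends to `0`. -/
def HypB4 (𝓔 : ℕ → Set (Set M)) (Mseq : ℕ → M ≃ₜ M) : Prop :=
  ∀ ε : ℝ, 0 < ε → ∃ N : ℕ, ∀ n ≥ N, ∀ (x : M) (r : ℝ),
    Metric.ball x r ⊆ (Psi Mseq n) ⁻¹' collUnion (𝓔 n) → r ≤ ε

end MetricDefs

section TopDefs
variable [TopologicalSpace M]

/-- A Cantor set in `M`. -/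
def IsCantorSet (K : Set M) : Prop :=
  K.Nonempty ∧ IsCompact K ∧ Perfect K ∧ IsTotallyDisconnected K

/-- A totally disconnected compact set is tamely embedded if it admits arbitrarily small
neighbourhoods that are finite unions of pairwise disjoint rectangles. -/
def TamelyEmbedded (d : ℕ) (Q : Set M) : Prop :=
  ∀ U : Set M, IsOpen U → Q ⊆ U →
    ∃ 𝓑 : Set (Set M), IsRectCollection d 𝓑 ∧ Q ⊆ interior (collUnion 𝓑) ∧ collUnion 𝓑 ⊆ U

/-- A Cantor set is dynamically coherent for `R`. -/
def DynamicallyCoherent (R : M ≃ₜ M) (K : Set M) : Prop :=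
  (∀ k : ℤ, ∃ U : Set M, IsOpen U ∧ (R.toEquiv ^ k) '' K ∩ K = U ∩ K) ∧
  ∀ p : ℕ, ∀ x ∈ K,
    (∃ k : ℕ, 1 ≤ k ∧ ∀ i : ℕ, k ≤ i → i ≤ k + p → (R.toEquiv ^ (i : ℤ)) x ∉ K) ∧
    (∃ l : ℕ, 1 ≤ l ∧ ∀ i : ℕ, l ≤ i → i ≤ l + p → (R.toEquiv ^ (-(i : ℤ))) x ∉ K)

/-- A Cantor set is dynamically meagre for `R`: it has empty interior in
`Λ = Cl(⋃ᵢ Rⁱ(K))`. -/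
def DynamicallyMeagre (R : M ≃ₜ M) (K : Set M) : Prop :=
  ∀ U : Set M, IsOpen U → U ∩ closure (⋃ i : ℤ, (R.toEquiv ^ i) '' K) ⊆ K →
    U ∩ closure (⋃ i : ℤ, (R.toEquiv ^ i) '' K) = ∅

/-- `R` is minimal on the invariant set `Λ` (every orbit of a point of `Λ` is dense in `Λ`). -/
def MinimalOnSet (R : M ≃ₜ M) (Λ : Set M) : Prop :=
  ∀ x ∈ Λ, Λ ⊆ closure (Set.range fun n : ℤ => (R.toEquiv ^ n) x)

/-- `R` is transitive on the invariant set `Λ` (some orbit is dense in `Λ`). -/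
def TransitiveOnSet (R : M ≃ₜ M) (Λ : Set M) : Prop :=
  ∃ x ∈ Λ, Λ ⊆ closure (Set.range fun n : ℤ => (R.toEquiv ^ n) x)

end TopDefs

/-- The support of a measure. -/
def measSupport {M : Type*} [TopologicalSpace M] [MeasurableSpace M] (μ : Measure M) : Set M :=
  {x | ∀ U : Set M, IsOpen U → x ∈ U → 0 < μ U}

/-- The measurable dynamical system `S` restricted to the `S`-invariant set `A` is isomorphic
to the system `T` restricted to the `T`-invariant set `B`, in the sense of Béguin–Crovisier–Le
Roux: there are full invariant subsets `X₀ ⊆ A`, `Y₀ ⊆ B` and a bijective bimeasurable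
conjugacy between them. -/
def MeasIsoOn {X Y : Type*} [MeasurableSpace X] [MeasurableSpace Y]
    (S : X → X) (A : Set X) (T : Y → Y) (B : Set Y) : Prop :=
  ∃ (X₀ : Set X) (Y₀ : Set Y) (Θ : X → Y),
    X₀ ⊆ A ∧ Y₀ ⊆ B ∧ MeasurableSet X₀ ∧ MeasurableSet Y₀ ∧
    S '' X₀ = X₀ ∧ T '' Y₀ = Y₀ ∧
    (∀ μ : Measure X, IsProbabilityMeasure μ → Measure.map S μ = μ → μ A = 1 → μ X₀ = 1) ∧
    (∀ ν : Measure Y, IsProbabilityMeasure ν → Measure.map T ν = ν → ν B = 1 → ν Y₀ = 1) ∧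
    Set.BijOn Θ X₀ Y₀ ∧
    (∀ V : Set Y, MeasurableSet V → MeasurableSet (X₀ ∩ Θ ⁻¹' V)) ∧
    (∀ U : Set X, MeasurableSet U → MeasurableSet (Θ '' (X₀ ∩ U))) ∧
    (∀ x ∈ X₀, Θ (S x) = T (Θ x))


/-! ### Auxiliary lemmas -/

namespace BCLAux

variable {M : Type*}

section Basic
variable [TopologicalSpace M]

lemma cont_zpow (h : M ≃ₜ M) (j : ℤ) : Continuous ⇑(h.toEquiv ^ j) := by
  induction j using Int.induction_on with
  | zero => simp only [zpow_zero, Equiv.Perm.coe_one]; exact continuous_id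
  | succ n ih =>
      rw [zpow_add_one, Equiv.Perm.coe_mul]
      exact ih.comp h.continuous
  | pred n ih =>
      rw [zpow_sub_one, Equiv.Perm.coe_mul]
      have hinv : ⇑(h.toEquiv⁻¹) = ⇑h.symm := rfl
      rw [hinv]
      exact ih.comp h.symm.continuous

lemma symm_zpow (h : M ≃ₜ M) (j : ℤ) : (h.toEquiv ^ j).symm = h.toEquiv ^ (-j) := by
  rw [zpow_neg]; rfl

/-- The homeomorphism whose underlying equiv is `h.toEquiv ^ j`. -/
def zhomeo (h : M ≃ₜ M) (j : ℤ) : M ≃ₜ M where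
  toEquiv := h.toEquiv ^ j
  continuous_toFun := cont_zpow h j
  continuous_invFun := by
    have h1 : Continuous ⇑(h.toEquiv ^ j).symm := by
      rw [symm_zpow]; exact cont_zpow h (-j)
    exact h1

@[simp] lemma zhomeo_apply (h : M ≃ₜ M) (j : ℤ) (x : M) :
    zhomeo h j x = (h.toEquiv ^ j) x := rfl

lemma zpow_apply_zpow (h : M ≃ₜ M) (a b : ℤ) (x : M) :
    (h.toEquiv ^ a) ((h.toEquiv ^ b) x) = (h.toEquiv ^ (a + b)) x := by
  rw [← Equiv.Perm.mul_apply, ← zpow_add]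

lemma zpow_neg_apply_zpow (h : M ≃ₜ M) (a : ℤ) (x : M) :
    (h.toEquiv ^ (-a)) ((h.toEquiv ^ a) x) = x := by
  rw [zpow_apply_zpow, neg_add_cancel, zpow_zero, Equiv.Perm.coe_one, id_eq]

end Basic

section Rect
variable [TopologicalSpace M] {d : ℕ}

lemma rect_nonempty {X : Set M} (h : IsRectangle d X) : X.Nonempty := by
  obtain ⟨e⟩ := h
  have h0 : (0 : EuclideanSpace ℝ (Fin d)) ∈
      Metric.closedBall (0 : EuclideanSpace ℝ (Fin d)) 1 := by
    simp
  exact ⟨e.symm ⟨0, h0⟩, (e.symm ⟨0, h0⟩).2⟩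

lemma rect_isCompact {X : Set M} (h : IsRectangle d X) : IsCompact X := by
  obtain ⟨e⟩ := h
  have h1 : CompactSpace (Metric.closedBall (0 : EuclideanSpace ℝ (Fin d)) 1) :=
    isCompact_iff_compactSpace.mp (isCompact_closedBall _ _)
  have h2 : CompactSpace X := e.symm.compactSpace
  exact isCompact_iff_compactSpace.mpr h2

lemma rect_isPreconnected {X : Set M} (h : IsRectangle d X) : IsPreconnected X := by
  obtain ⟨e⟩ := h
  have hpc : IsPreconnected (Metric.closedBall (0 : EuclideanSpace ℝ (Fin d)) 1) :=
    (convex_closedBall _ _).isPreconnected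
  haveI : PreconnectedSpace (Metric.closedBall (0 : EuclideanSpace ℝ (Fin d)) 1) :=
    Subtype.preconnectedSpace hpc
  have hX : X = (fun b : (Metric.closedBall (0 : EuclideanSpace ℝ (Fin d)) 1) =>
      (e.symm b : M)) '' Set.univ := by
    ext x
    constructor
    · intro hx
      exact ⟨e ⟨x, hx⟩, trivial, by simp⟩
    · rintro ⟨b, -, rfl⟩
      exact (e.symm b).2
  rw [hX]
  exact isPreconnected_univ.image _
    (Continuous.continuousOn (continuous_subtype_val.comp e.symm.continuous))

end Rect

section Coll
variable [TopologicalSpace M] {d : ℕ} {R : M ≃ₜ M}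

lemma iterColl_mono {𝓔 : Set (Set M)} {a b : ℕ} (h : a ≤ b) :
    iterColl R 𝓔 a ⊆ iterColl R 𝓔 b := by
  rintro Y ⟨k, hk, X, hX, rfl⟩
  exact ⟨k, le_trans hk (by exact_mod_cast h), X, hX, rfl⟩

lemma self_mem_iterColl {𝓔 : Set (Set M)} {X : Set M} (hX : X ∈ 𝓔) (n : ℕ) :
    X ∈ iterColl R 𝓔 n :=
  ⟨0, by rw [abs_zero]; exact Int.natCast_nonneg n, X, hX, by
    rw [zpow_zero, Equiv.Perm.coe_one, Set.image_id]⟩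

lemma iterColl_finite {𝓔 : Set (Set M)} (h𝓔 : 𝓔.Finite) (n : ℕ) :
    (iterColl R 𝓔 n).Finite := by
  have hsub : iterColl R 𝓔 n ⊆
      ⋃ k ∈ Set.Icc (-(n : ℤ)) (n : ℤ), (fun X => (R.toEquiv ^ k) '' X) '' 𝓔 := by
    rintro Y ⟨k, hk, X, hX, rfl⟩
    have h2 := abs_le.mp hk
    exact Set.mem_biUnion (Set.mem_Icc.mpr ⟨h2.1, h2.2⟩) ⟨X, hX, rfl⟩
  exact ((Set.finite_Icc _ _).biUnion (fun k _ => h𝓔.image _)).subset hsub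

lemma iterColl_nonempty {𝓔 : Set (Set M)} (hrect : ∀ X ∈ 𝓔, IsRectangle d X)
    {Y : Set M} {n : ℕ} (hY : Y ∈ iterColl R 𝓔 n) : Y.Nonempty := by
  obtain ⟨k, -, X, hX, rfl⟩ := hY
  exact (rect_nonempty (hrect X hX)).image _

lemma iterColl_isCompact {𝓔 : Set (Set M)} (hrect : ∀ X ∈ 𝓔, IsRectangle d X)
    {Y : Set M} {n : ℕ} (hY : Y ∈ iterColl R 𝓔 n) : IsCompact Y := by
  obtain ⟨k, -, X, hX, rfl⟩ := hY
  exact (rect_isCompact (hrect X hX)).image (cont_zpow R k)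

lemma iterColl_isClosed [T2Space M] {𝓔 : Set (Set M)} (hrect : ∀ X ∈ 𝓔, IsRectangle d X)
    {Y : Set M} {n : ℕ} (hY : Y ∈ iterColl R 𝓔 n) : IsClosed Y :=
  (iterColl_isCompact hrect hY).isClosed

lemma iterColl_isPreconnected {𝓔 : Set (Set M)} (hrect : ∀ X ∈ 𝓔, IsRectangle d X)
    {Y : Set M} {n : ℕ} (hY : Y ∈ iterColl R 𝓔 n) : IsPreconnected Y := by
  obtain ⟨k, -, X, hX, rfl⟩ := hY
  exact (rect_isPreconnected (hrect X hX)).image _ (cont_zpow R k).continuousOn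

lemma iterColl_not_isOpen {𝓔 : Set (Set M)} (hno : ∀ X ∈ 𝓔, ¬ IsOpen X)
    {Y : Set M} {n : ℕ} (hY : Y ∈ iterColl R 𝓔 n) : ¬ IsOpen Y := by
  obtain ⟨k, -, X, hX, rfl⟩ := hY
  intro hop
  apply hno X hX
  have hXeq : X = ⇑(R.toEquiv ^ k) ⁻¹' ((R.toEquiv ^ k) '' X) := by
    rw [Set.preimage_image_eq _ (Equiv.injective _)]
  rw [hXeq]
  exact hop.preimage (cont_zpow R k)

lemma collUnion_isClosed [T2Space M] {𝓕 : Set (Set M)} (hfin : 𝓕.Finite)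
    (hcl : ∀ Y ∈ 𝓕, IsClosed Y) : IsClosed (collUnion 𝓕) := by
  rw [collUnion, Set.sUnion_eq_biUnion]
  exact hfin.isClosed_biUnion hcl

lemma iterColl_eq_of_inter {𝓔 : Set (Set M)} {n p : ℕ} (hiter : IterableColl R 𝓔 p)
    (hnp : n ≤ p) {Y O : Set M} (hY : Y ∈ iterColl R 𝓔 n) (hO : O ∈ iterColl R 𝓔 n)
    {x : M} (hxY : x ∈ Y) (hxO : x ∈ O) : Y = O := by
  obtain ⟨k, hk, X, hX, rfl⟩ := hY
  obtain ⟨l, hl, X', hX', rfl⟩ := hO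
  rcases hiter X hX X' hX' k l (le_trans hk (by exact_mod_cast hnp))
      (le_trans hl (by exact_mod_cast hnp)) with h | h
  · exact absurd h (Set.not_disjoint_iff.mpr ⟨x, hxY, hxO⟩)
  · exact h

lemma E0_mono {𝓔 : ℕ → Set (Set M)} (hc : ∀ n, CompatibleFor R (𝓔 (n + 1)) (𝓔 n) (n + 1))
    {a b : ℕ} (h : a ≤ b) : collUnion (𝓔 b) ⊆ collUnion (𝓔 a) := by
  induction b, h using Nat.le_induction with
  | base => exact Set.Subset.refl _
  | succ b hb ih => exact Set.Subset.trans (hc b).1 ih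

end Coll

section Support
variable [TopologicalSpace M]

lemma fix_of_not_support (f : M ≃ₜ M) {x : M} (h : x ∉ homeoSupport f) : f x = x := by
  by_contra hne
  exact h (subset_closure hne)

lemma support_symm (f : M ≃ₜ M) : homeoSupport f.symm = homeoSupport f := by
  have hset : {x : M | f.symm x ≠ x} = {x : M | f x ≠ x} := by
    ext x
    simp only [Set.mem_setOf_eq]
    constructor
    · intro h hc
      apply h
      have h2 := congrArg f.symm hc
      rw [Homeomorph.symm_apply_apply] at h2
      exact h2.symm
    · intro h hc
      apply h
      have h2 := congrArg f hc
      rw [Homeomorph.apply_symm_apply] at h2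
      exact h2.symm
  unfold homeoSupport
  rw [hset]

lemma image_subset_of_support (f : M ≃ₜ M) {E : Set M} (hE : homeoSupport f ⊆ E) :
    f '' E ⊆ E := by
  rintro _ ⟨x, hx, rfl⟩
  by_contra hfx
  have h1 : f (f x) = f x := fix_of_not_support f (fun hs => hfx (hE hs))
  have h2 : f x = x := f.injective h1
  rw [h2] at hfx
  exact hfx hx

lemma support_rect_fixed [T2Space M] {fam : Set (Set M)} (hfin : fam.Finite)
    (hclosed : ∀ Y ∈ fam, IsClosed Y) (hconn : ∀ Y ∈ fam, IsPreconnected Y)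
    (hnotopen : ∀ Y ∈ fam, ¬ IsOpen Y)
    (hdisj : ∀ Y ∈ fam, ∀ O ∈ fam, (Y ∩ O).Nonempty → Y = O)
    (f : M ≃ₜ M) (hsupp : homeoSupport f ⊆ ⋃₀ fam) :
    ∀ Y ∈ fam, Y.Nonempty → f '' Y = Y := by
  have key : ∀ (g : M ≃ₜ M), homeoSupport g ⊆ ⋃₀ fam →
      ∀ Y ∈ fam, Y.Nonempty → g '' Y ⊆ Y := by
    intro g hg Y hY hYne
    have hCconn : IsPreconnected (g '' Y) := (hconn Y hY).image _ g.continuous.continuousOn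
    have hCsub : g '' Y ⊆ ⋃₀ fam := fun y hy =>
      image_subset_of_support g hg (Set.image_mono (Set.subset_sUnion_of_mem hY) hy)
    obtain ⟨c₀, hc₀⟩ := hYne.image ⇑g
    obtain ⟨Y'', hY'', hc₀Y''⟩ := hCsub hc₀
    have hmemU : ∀ c, c ∈ Y'' → c ∈ (⋃₀ (fam \ {Y''}))ᶜ := by
      intro c hc hmem
      obtain ⟨Z, hZ, hcZ⟩ := hmem
      exact hZ.2 (hdisj Z hZ.1 Y'' hY'' ⟨c, hcZ, hc⟩)
    have hCY : g '' Y ⊆ Y'' := by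
      by_contra hnot
      obtain ⟨c₁, hc₁C, hc₁⟩ := Set.not_subset.mp hnot
      have hUopen : IsOpen (⋃₀ (fam \ {Y''}))ᶜ := by
        have hcl : IsClosed (⋃₀ (fam \ {Y''})) := by
          rw [Set.sUnion_eq_biUnion]
          exact (hfin.subset Set.diff_subset).isClosed_biUnion (fun Z hZ => hclosed Z hZ.1)
        exact hcl.isOpen_compl
      have hVopen : IsOpen (Y'')ᶜ := (hclosed _ hY'').isOpen_compl
      have hcover : g '' Y ⊆ (⋃₀ (fam \ {Y''}))ᶜ ∪ (Y'')ᶜ := by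
        intro c hc
        by_cases h : c ∈ Y''
        · exact Or.inl (hmemU c h)
        · exact Or.inr h
      rcases hCconn _ _ hUopen hVopen hcover
          ⟨c₀, hc₀, hmemU c₀ hc₀Y''⟩ ⟨c₁, hc₁C, hc₁⟩ with ⟨c, hcC, hcU, hcV⟩
      obtain ⟨Z, hZ, hcZ⟩ := hCsub hcC
      by_cases h : Z = Y''
      · exact hcV (h ▸ hcZ)
      · exact hcU ⟨Z, ⟨hZ, h⟩, hcZ⟩
    have hbex : ∃ b ∈ Y, b ∉ interior Y := by
      by_contra hb
      push_neg at hb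
      apply hnotopen Y hY
      have hYint : Y = interior Y := Set.Subset.antisymm hb interior_subset
      rw [hYint]
      exact isOpen_interior
    obtain ⟨b, hbY, hbni⟩ := hbex
    have hbfix : g b = b := by
      have hfixclosed : IsClosed {x | g x = x} := isClosed_eq g.continuous continuous_id
      have hsubfix : (⋃₀ fam)ᶜ ⊆ {x | g x = x} := fun x hx =>
        fix_of_not_support g (fun hs => hx (hg hs))
      have hbW : b ∈ (⋃₀ (fam \ {Y}))ᶜ := by
        intro hmem
        obtain ⟨Z, hZ, hbZ⟩ := hmem
        exact hZ.2 (hdisj Z hZ.1 Y hY ⟨b, hbZ, hbY⟩)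
      have hWopen : IsOpen (⋃₀ (fam \ {Y}))ᶜ := by
        have hcl : IsClosed (⋃₀ (fam \ {Y})) := by
          rw [Set.sUnion_eq_biUnion]
          exact (hfin.subset Set.diff_subset).isClosed_biUnion (fun Z hZ => hclosed Z hZ.1)
        exact hcl.isOpen_compl
      have hbcl : b ∈ closure (⋃₀ fam)ᶜ := by
        rw [mem_closure_iff]
        intro o ho hbo
        have hno : ¬ (o ∩ (⋃₀ (fam \ {Y}))ᶜ ⊆ Y) := by
          intro hsub
          exact hbni (interior_maximal hsub (ho.inter hWopen) ⟨hbo, hbW⟩)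
        obtain ⟨c, hc, hcY⟩ := Set.not_subset.mp hno
        refine ⟨c, hc.1, ?_⟩
        intro hcE
        obtain ⟨Z, hZ, hcZ⟩ := hcE
        by_cases h : Z = Y
        · exact hcY (h ▸ hcZ)
        · exact hc.2 ⟨Z, ⟨hZ, h⟩, hcZ⟩
      exact closure_minimal hsubfix hfixclosed hbcl
    have hbC : b ∈ g '' Y := ⟨b, hbY, hbfix⟩
    have hYY : Y = Y'' := hdisj Y hY Y'' hY'' ⟨b, hbY, hCY hbC⟩
    rw [← hYY] at hCY
    exact hCY
  intro Y hY hYne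
  have h1 : f '' Y ⊆ Y := key f hsupp Y hY hYne
  have h2 : f.symm '' Y ⊆ Y := by
    refine key f.symm ?_ Y hY hYne
    rw [support_symm]
    exact hsupp
  refine Set.Subset.antisymm h1 ?_
  intro y hy
  have hmem : f (f.symm y) ∈ f '' (f.symm '' Y) := ⟨f.symm y, ⟨y, hy, rfl⟩, rfl⟩
  rw [f.apply_symm_apply] at hmem
  exact (Set.image_mono (f := ⇑f) h2) hmem

end Support

section Radius
variable [MetricSpace M] [CompactSpace M] [LocallyConnectedSpace M] [Nonempty M]

lemma exists_uniform_radius :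
    ∃ r₀ : ℝ, 0 < r₀ ∧ ∀ A : Set M, IsClopen A → ∀ p ∈ A, Metric.ball p r₀ ⊆ A := by
  have hcomp : ∀ x : M, ∃ ρ : ℝ, 0 < ρ ∧
      ∀ p ∈ connectedComponent x, Metric.ball p ρ ⊆ connectedComponent x := by
    intro x
    set C := connectedComponent x with hC
    have hCclopen : IsClopen C := isClopen_connectedComponent
    rcases Set.eq_empty_or_nonempty Cᶜ with hce | hcne
    · refine ⟨1, one_pos, fun p _ q _ => ?_⟩
      by_contra hq
      exact (Set.eq_empty_iff_forall_notMem.mp hce q) hq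
    · have hCcomp : IsCompact C := hCclopen.1.isCompact
      have hCne : C.Nonempty := ⟨x, mem_connectedComponent⟩
      obtain ⟨p₀, hp₀, hmin⟩ := hCcomp.exists_isMinOn hCne
        ((Metric.continuous_infDist_pt Cᶜ).continuousOn)
      refine ⟨Metric.infDist p₀ Cᶜ, ?_, ?_⟩
      · exact (hCclopen.2.isClosed_compl.notMem_iff_infDist_pos hcne).mp
          (fun hmem => hmem hp₀)
      · intro p hp q hq
        by_contra hqC
        have h1 : Metric.infDist p Cᶜ ≤ dist p q := Metric.infDist_le_dist_of_mem hqC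
        have h2 : Metric.infDist p₀ Cᶜ ≤ Metric.infDist p Cᶜ := hmin hp
        have h3 : dist p q < Metric.infDist p₀ Cᶜ := Metric.mem_ball'.mp hq
        linarith
  choose ρ hρpos hρ using hcomp
  obtain ⟨t, ht⟩ := IsCompact.elim_finite_subcover isCompact_univ
    (fun x : M => connectedComponent x) (fun x => isOpen_connectedComponent)
    (fun y _ => Set.mem_iUnion.mpr ⟨y, mem_connectedComponent⟩)
  have htne : t.Nonempty := by
    obtain ⟨m₀⟩ := (inferInstance : Nonempty M)
    obtain ⟨x, hx, -⟩ := Set.mem_iUnion₂.mp (ht (Set.mem_univ m₀))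
    exact ⟨x, hx⟩
  refine ⟨t.inf' htne ρ, ?_, ?_⟩
  · rw [Finset.lt_inf'_iff]
    exact fun x _ => hρpos x
  · intro A hA p hp
    obtain ⟨x, hxt, hpx⟩ := Set.mem_iUnion₂.mp (ht (Set.mem_univ p))
    have hcc : connectedComponent p = connectedComponent x := (connectedComponent_eq hpx).symm
    have hsub : Metric.ball p (t.inf' htne ρ) ⊆ connectedComponent x := by
      refine Set.Subset.trans (Metric.ball_subset_ball ?_) (hρ x p hpx)
      exact Finset.inf'_le ρ hxt
    refine Set.Subset.trans hsub ?_
    rw [← hcc]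
    exact hA.connectedComponent_subset hp

end Radius

set_option linter.unusedSectionVars false

section Dyn
variable [MetricSpace M] [CompactSpace M]
variable {d : ℕ} {R : M ≃ₜ M} {𝓔 : ℕ → Set (Set M)} {Mseq : ℕ → M ≃ₜ M}

lemma psi_succ (Mseq : ℕ → M ≃ₜ M) (n : ℕ) (x : M) :
    Psi Mseq (n + 1) x = Mseq (n + 1) (Psi Mseq n x) := rfl

lemma famP6 (hrect : ∀ n, IsRectCollection d (𝓔 n)) (hA1 : HypA1 R 𝓔)
    (hB1 : HypB1 R 𝓔 Mseq) {n₀ : ℕ} (hNO : ∀ j, n₀ ≤ j → ∀ X ∈ 𝓔 j, ¬ IsOpen X)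
    {k : ℕ} (hk : n₀ ≤ k) {Y : Set M} (hY : Y ∈ iterColl R (𝓔 k) k) :
    (Mseq (k + 1)) '' Y = Y := by
  refine support_rect_fixed (iterColl_finite (hrect k).1 k)
    (fun Y hY => iterColl_isClosed (hrect k).2.1 hY)
    (fun Y hY => iterColl_isPreconnected (hrect k).2.1 hY)
    (fun Y hY => iterColl_not_isOpen (hNO k hk) hY)
    (fun Y hY O hO ⟨x, hx1, hx2⟩ =>
      iterColl_eq_of_inter (hA1.1 k).1 (Nat.le_succ k) hY hO hx1 hx2)
    (Mseq (k + 1)) (hB1 k) Y hY (iterColl_nonempty (hrect k).2.1 hY)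

lemma famP6_mem (hrect : ∀ n, IsRectCollection d (𝓔 n)) (hA1 : HypA1 R 𝓔)
    (hB1 : HypB1 R 𝓔 Mseq) {n₀ : ℕ} (hNO : ∀ j, n₀ ≤ j → ∀ X ∈ 𝓔 j, ¬ IsOpen X)
    {k : ℕ} (hk : n₀ ≤ k) {Y : Set M} (hY : Y ∈ iterColl R (𝓔 k) k)
    {p : M} (hp : p ∈ Y) : Mseq (k + 1) p ∈ Y := by
  have h := famP6 hrect hA1 hB1 hNO hk hY
  have h2 := Set.mem_image_of_mem (⇑(Mseq (k + 1))) hp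
  rwa [h] at h2

lemma famP6_symm_mem (hrect : ∀ n, IsRectCollection d (𝓔 n)) (hA1 : HypA1 R 𝓔)
    (hB1 : HypB1 R 𝓔 Mseq) {n₀ : ℕ} (hNO : ∀ j, n₀ ≤ j → ∀ X ∈ 𝓔 j, ¬ IsOpen X)
    {k : ℕ} (hk : n₀ ≤ k) {Y : Set M} (hY : Y ∈ iterColl R (𝓔 k) k)
    {p : M} (hp : p ∈ Y) : (Mseq (k + 1)).symm p ∈ Y := by
  have h := famP6 hrect hA1 hB1 hNO hk hY
  rw [← h] at hp
  obtain ⟨q, hq, hqe⟩ := hp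
  have : (Mseq (k + 1)).symm p = q := by
    rw [← hqe]
    exact Homeomorph.symm_apply_apply _ _
  rw [this]
  exact hq

lemma move_fwd (hrect : ∀ n, IsRectCollection d (𝓔 n)) (hA1 : HypA1 R 𝓔)
    (hB1 : HypB1 R 𝓔 Mseq) {n₀ : ℕ} (hNO : ∀ j, n₀ ≤ j → ∀ X ∈ 𝓔 j, ¬ IsOpen X)
    {m k : ℕ} (hm : n₀ ≤ m) (hk : m ≤ k) {Y : Set M} (hY : Y ∈ iterColl R (𝓔 m) m)
    {p : M} (hp : p ∈ Y) : Mseq (k + 1) p ∈ Y := by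
  by_cases hpE : p ∈ collUnion (iterColl R (𝓔 k) k)
  · obtain ⟨O, hO, hpO⟩ := hpE
    rcases eq_or_lt_of_le hk with he | hlt
    · subst he
      have hOY : O = Y := iterColl_eq_of_inter (hA1.1 m).1 (Nat.le_succ m) hO hY hpO hp
      rw [← hOY]
      exact famP6_mem hrect hA1 hB1 hNO hm hO hpO
    · rcases (hA1.2.1 m k hlt).2 Y (iterColl_mono (Nat.le_succ m) hY) O
          (iterColl_mono (Nat.le_succ k) hO) with h | h
      · exact absurd h (Set.not_disjoint_iff.mpr ⟨p, hp, hpO⟩)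
      · have := famP6_mem hrect hA1 hB1 hNO (le_trans hm (le_of_lt hlt)) hO hpO
        exact interior_subset (h this)
  · have hfix : Mseq (k + 1) p = p :=
      fix_of_not_support _ (fun hs => hpE (hB1 k hs))
    rw [hfix]
    exact hp

lemma move_bwd (hrect : ∀ n, IsRectCollection d (𝓔 n)) (hA1 : HypA1 R 𝓔)
    (hB1 : HypB1 R 𝓔 Mseq) {n₀ : ℕ} (hNO : ∀ j, n₀ ≤ j → ∀ X ∈ 𝓔 j, ¬ IsOpen X)
    {m k : ℕ} (hm : n₀ ≤ m) (hk : m ≤ k) {Y : Set M} (hY : Y ∈ iterColl R (𝓔 m) m)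
    {p : M} (hp : p ∈ Y) : (Mseq (k + 1)).symm p ∈ Y := by
  by_cases hpE : p ∈ collUnion (iterColl R (𝓔 k) k)
  · obtain ⟨O, hO, hpO⟩ := hpE
    rcases eq_or_lt_of_le hk with he | hlt
    · subst he
      have hOY : O = Y := iterColl_eq_of_inter (hA1.1 m).1 (Nat.le_succ m) hO hY hpO hp
      rw [← hOY]
      exact famP6_symm_mem hrect hA1 hB1 hNO hm hO hpO
    · rcases (hA1.2.1 m k hlt).2 Y (iterColl_mono (Nat.le_succ m) hY) O
          (iterColl_mono (Nat.le_succ k) hO) with h | h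
      · exact absurd h (Set.not_disjoint_iff.mpr ⟨p, hp, hpO⟩)
      · have := famP6_symm_mem hrect hA1 hB1 hNO (le_trans hm (le_of_lt hlt)) hO hpO
        exact interior_subset (h this)
  · have hfix : (Mseq (k + 1)).symm p = p := by
      refine fix_of_not_support _ ?_
      rw [support_symm]
      exact fun hs => hpE (hB1 k hs)
    rw [hfix]
    exact hp

lemma stay (hrect : ∀ n, IsRectCollection d (𝓔 n)) (hA1 : HypA1 R 𝓔)
    (hB1 : HypB1 R 𝓔 Mseq) {n₀ : ℕ} (hNO : ∀ j, n₀ ≤ j → ∀ X ∈ 𝓔 j, ¬ IsOpen X)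
    {m : ℕ} (hm : n₀ ≤ m) {Y : Set M} (hY : Y ∈ iterColl R (𝓔 m) m)
    {u : M} (hu : Psi Mseq m u ∈ Y) : ∀ k, m ≤ k → Psi Mseq k u ∈ Y := by
  intro k hk
  induction k, hk using Nat.le_induction with
  | base => exact hu
  | succ k hk ih =>
      rw [psi_succ]
      exact move_fwd hrect hA1 hB1 hNO hm hk hY ih

lemma trap (hrect : ∀ n, IsRectCollection d (𝓔 n)) (hA1 : HypA1 R 𝓔)
    (hB1 : HypB1 R 𝓔 Mseq) {n₀ : ℕ} (hNO : ∀ j, n₀ ≤ j → ∀ X ∈ 𝓔 j, ¬ IsOpen X)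
    {m₀ : ℕ} (hm₀ : n₀ ≤ m₀) {Y : Set M} (hY : Y ∈ iterColl R (𝓔 (m₀ + 1)) (m₀ + 1))
    (hdisjE : ∀ p ∈ Y, p ∉ collUnion (iterColl R (𝓔 m₀) m₀)) :
    ∀ k, m₀ ≤ k → ∀ p : M, Psi Mseq k p ∈ Y → Psi Mseq m₀ p ∈ Y := by
  intro k hk
  induction k, hk using Nat.le_induction with
  | base => exact fun p hp => hp
  | succ k hk ih =>
      intro p hp
      rw [psi_succ] at hp
      have hqY : Psi Mseq k p ∈ Y := by
        have hsymm : (Mseq (k + 1)).symm (Mseq (k + 1) (Psi Mseq k p)) = Psi Mseq k p :=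
          Homeomorph.symm_apply_apply _ _
        rcases eq_or_lt_of_le hk with he | hlt
        · -- k = m₀, the map fixes Y pointwise
          have hfix : (Mseq (k + 1)).symm (Mseq (k + 1) (Psi Mseq k p)) =
              Mseq (k + 1) (Psi Mseq k p) := by
            refine fix_of_not_support _ ?_
            rw [support_symm]
            intro hs
            apply hdisjE _ hp
            rw [he]
            exact hB1 k hs
          rw [← hsymm, hfix]
          exact hp
        · rw [← hsymm]
          exact move_bwd hrect hA1 hB1 hNO (le_trans hm₀ (Nat.le_succ m₀)) hlt hY hp
      exact ih p hqY

lemma freeze (hB1 : HypB1 R 𝓔 Mseq) {u : M} {n : ℕ} :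
    ∀ k, n ≤ k → (∀ j, n ≤ j → j < k → Psi Mseq j u ∉ collUnion (iterColl R (𝓔 j) j)) →
      Psi Mseq k u = Psi Mseq n u := by
  intro k hk
  induction k, hk using Nat.le_induction with
  | base => intro _; rfl
  | succ k hk ih =>
      intro hj
      have h2 : Mseq (k + 1) (Psi Mseq k u) = Psi Mseq k u :=
        fix_of_not_support _ (fun hs => hj k hk (Nat.lt_succ_self k) (hB1 k hs))
      rw [psi_succ, h2]
      exact ih (fun j h1 h2' => hj j h1 (Nat.lt_succ_of_lt h2'))

lemma psi_tendsto {Ψ : M → M} (hΨ : TendstoUniformly (fun n => ⇑(Psi Mseq n)) Ψ Filter.atTop)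
    (u : M) : Filter.Tendsto (fun k => Psi Mseq k u) Filter.atTop (nhds (Ψ u)) :=
  hΨ.tendsto_at u

lemma limit_mem_of_stay {Ψ : M → M}
    (hΨ : TendstoUniformly (fun n => ⇑(Psi Mseq n)) Ψ Filter.atTop)
    {Y : Set M} (hYc : IsClosed Y) {u : M} {m : ℕ}
    (h : ∀ k, m ≤ k → Psi Mseq k u ∈ Y) : Ψ u ∈ Y :=
  hYc.mem_of_tendsto (psi_tendsto hΨ u) (Filter.eventually_atTop.mpr ⟨m, h⟩)

lemma typeI_value (hB1 : HypB1 R 𝓔 Mseq) {Ψ : M → M}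
    (hΨ : TendstoUniformly (fun n => ⇑(Psi Mseq n)) Ψ Filter.atTop) {u : M} {n : ℕ}
    (h : ∀ m, n ≤ m → Psi Mseq m u ∉ collUnion (iterColl R (𝓔 m) m)) :
    ∀ m, n ≤ m → Psi Mseq m u = Ψ u := by
  have hconst : ∀ m, n ≤ m → Psi Mseq m u = Psi Mseq n u :=
    fun m hm => freeze hB1 m hm (fun j hj _ => h j hj)
  have hlim : Ψ u = Psi Mseq n u := by
    have ht : Filter.Tendsto (fun k => Psi Mseq k u) Filter.atTop (nhds (Psi Mseq n u)) := by
      refine Filter.Tendsto.congr' ?_ tendsto_const_nhds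
      exact Filter.eventually_atTop.mpr ⟨n, fun m hm => (hconst m hm).symm⟩
    exact tendsto_nhds_unique (psi_tendsto hΨ u) ht
  intro m hm
  rw [hconst m hm, ← hlim]

lemma entry (hrect : ∀ n, IsRectCollection d (𝓔 n)) (hA1 : HypA1 R 𝓔)
    (hB1 : HypB1 R 𝓔 Mseq) {n₀ : ℕ} (hNO : ∀ j, n₀ ≤ j → ∀ X ∈ 𝓔 j, ¬ IsOpen X)
    {Ψ : M → M} (hΨ : TendstoUniformly (fun n => ⇑(Psi Mseq n)) Ψ Filter.atTop)
    {u : M}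
    (hact : ∀ n : ℕ, ∃ m, n ≤ m ∧ Psi Mseq m u ∈ collUnion (iterColl R (𝓔 m) m))
    (hinact : ∀ n : ℕ, ∃ m, n ≤ m ∧ Psi Mseq m u ∉ collUnion (iterColl R (𝓔 m) m))
    {nb : ℕ} (hnb : n₀ ≤ nb) :
    ∃ m₀, nb ≤ m₀ ∧ ∃ Y ∈ iterColl R (𝓔 (m₀ + 1)) (m₀ + 2),
      Y ∉ iterColl R (𝓔 (m₀ + 1)) m₀ ∧
      Psi Mseq m₀ u ∈ Y ∧ Ψ u ∈ Y ∧
      (∀ k, m₀ ≤ k → ∀ p : M, Psi Mseq k p ∈ Y → Psi Mseq m₀ p ∈ Y) := by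
  classical
  obtain ⟨s, hs1, hs2⟩ := hinact nb
  obtain ⟨m', hm'1, hm'2⟩ := hact (s + 1)
  have hex : ∃ m, s < m ∧ Psi Mseq m u ∈ collUnion (iterColl R (𝓔 m) m) :=
    ⟨m', hm'1, hm'2⟩
  obtain ⟨hsm, hmact⟩ := Nat.find_spec hex
  obtain ⟨m₀, hm₀⟩ : ∃ m₀, Nat.find hex = m₀ + 1 := ⟨Nat.find hex - 1, by omega⟩
  have hm₀s : s ≤ m₀ := by omega
  have hm₀inact : Psi Mseq m₀ u ∉ collUnion (iterColl R (𝓔 m₀) m₀) := by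
    rcases eq_or_lt_of_le hm₀s with he | hlt
    · rw [← he]; exact hs2
    · intro hmem
      exact Nat.find_min hex (by omega : m₀ < Nat.find hex) ⟨hlt, hmem⟩
  have hfr : Psi Mseq (m₀ + 1) u = Psi Mseq m₀ u := by
    rw [psi_succ]
    exact fix_of_not_support _ (fun hs' => hm₀inact (hB1 m₀ hs'))
  have hact1 : Psi Mseq (m₀ + 1) u ∈ collUnion (iterColl R (𝓔 (m₀ + 1)) (m₀ + 1)) := by
    rw [← hm₀]
    exact hmact
  obtain ⟨Y, hYfam, hmemY⟩ := hact1
  have hmY₀ : Psi Mseq m₀ u ∈ Y := by rw [← hfr]; exact hmemY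
  have hnbm₀ : nb ≤ m₀ := le_trans hs1 hm₀s
  have hn₀m₀ : n₀ ≤ m₀ := le_trans hnb hnbm₀
  have hdisjE : ∀ p ∈ Y, p ∉ collUnion (iterColl R (𝓔 m₀) m₀) := by
    have hDis : ∀ O ∈ iterColl R (𝓔 m₀) m₀, Disjoint O Y := by
      intro O hO
      rcases (hA1.2.1 m₀ (m₀ + 1) (Nat.lt_succ_self m₀)).2 O
          (iterColl_mono (Nat.le_succ m₀) hO) Y
          (iterColl_mono (Nat.le_succ (m₀ + 1)) hYfam) with h | h
      · exact h
      · exact absurd ⟨O, hO, interior_subset (h hmY₀)⟩ hm₀inact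
    intro p hpY hpE
    obtain ⟨O, hO, hpO⟩ := hpE
    exact Set.disjoint_left.mp (hDis O hO) hpO hpY
  have hnew : Y ∉ iterColl R (𝓔 (m₀ + 1)) m₀ := by
    rintro ⟨a, ha, X, hX, hYeq⟩
    apply hm₀inact
    have hmem2 := hmY₀
    rw [hYeq] at hmem2
    obtain ⟨x, hx, hxe⟩ := hmem2
    have hxE : x ∈ collUnion (𝓔 m₀) :=
      E0_mono hA1.2.2 (Nat.le_succ m₀) (Set.subset_sUnion_of_mem hX hx)
    obtain ⟨X₁, hX₁, hxX₁⟩ := hxE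
    exact ⟨(R.toEquiv ^ a) '' X₁, ⟨a, ha, X₁, hX₁, rfl⟩, ⟨x, hxX₁, hxe⟩⟩
  have hstay : ∀ k, m₀ + 1 ≤ k → Psi Mseq k u ∈ Y :=
    stay hrect hA1 hB1 hNO (le_trans hn₀m₀ (Nat.le_succ m₀)) hYfam hmemY
  have hΨY : Ψ u ∈ Y :=
    limit_mem_of_stay hΨ (iterColl_isClosed (hrect (m₀ + 1)).2.1 hYfam) hstay
  have htrap : ∀ k, m₀ ≤ k → ∀ p : M, Psi Mseq k p ∈ Y → Psi Mseq m₀ p ∈ Y :=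
    trap hrect hA1 hB1 hNO hn₀m₀ hYfam hdisjE
  exact ⟨m₀, hnbm₀, Y, iterColl_mono (Nat.le_succ (m₀ + 1)) hYfam, hnew, hmY₀, hΨY, htrap⟩

lemma LAD (hA1 : HypA1 R 𝓔) {z : M} {k₁ : ℕ}
    (hz : ∀ k, k₁ ≤ k → z ∈ collUnion (iterColl R (𝓔 k) k)) :
    ∃ jj : ℤ, z ∈ (R.toEquiv ^ jj) '' limitK 𝓔 := by
  classical
  have hsel : ∀ t : ℕ, ∃ j : ℤ, ∃ X : Set M, |j| ≤ ((k₁ + t : ℕ) : ℤ) ∧ X ∈ 𝓔 (k₁ + t) ∧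
      z ∈ (R.toEquiv ^ j) '' X := by
    intro t
    obtain ⟨Y, ⟨j, hj, X, hX, rfl⟩, hzY⟩ := hz (k₁ + t) (Nat.le_add_right _ _)
    exact ⟨j, X, hj, hX, hzY⟩
  choose j X hj hX hzX using hsel
  have hv : ∀ t, (R.toEquiv ^ (-(j t))) z ∈ X t := by
    intro t
    obtain ⟨x, hx, hxe⟩ := hzX t
    rw [← hxe, zpow_neg_apply_zpow]
    exact hx
  have key : ∀ t s, (R.toEquiv ^ (-(j s))) z ∈ collUnion (𝓔 (k₁ + s + t)) := by
    intro t
    induction t with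
    | zero =>
        intro s
        rw [Nat.add_zero]
        exact Set.mem_sUnion.mpr ⟨X s, hX s, hv s⟩
    | succ t ih =>
        intro s
        have h1 := ih s
        have h2 := ih (s + 1)
        have hrel : (R.toEquiv ^ (-(j s))) z =
            (R.toEquiv ^ (j (s + 1) - j s)) ((R.toEquiv ^ (-(j (s + 1)))) z) := by
          rw [zpow_apply_zpow]
          have harg : j (s + 1) - j s + -(j (s + 1)) = -(j s) := by ring
          rw [harg]
        have hmemδ : (R.toEquiv ^ (-(j s))) z ∈
            (R.toEquiv ^ (j (s + 1) - j s)) '' collUnion (𝓔 (k₁ + s + t + 1)) := by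
          refine ⟨(R.toEquiv ^ (-(j (s + 1)))) z, ?_, hrel.symm⟩
          have hidx : k₁ + (s + 1) + t = k₁ + s + t + 1 := by omega
          rw [← hidx]
          exact h2
        have habs : |j (s + 1) - j s| ≤ 2 * (((k₁ + s + t : ℕ) + 1 : ℕ) : ℤ) + 1 := by
          have h3 : |j (s + 1) - j s| ≤ |j (s + 1)| + |j s| := abs_sub _ _
          have h4 := hj (s + 1)
          have h5 := hj s
          have h6 : ((k₁ + (s + 1) : ℕ) : ℤ) + ((k₁ + s : ℕ) : ℤ) ≤
              2 * (((k₁ + s + t : ℕ) + 1 : ℕ) : ℤ) + 1 := by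
            push_cast
            omega
          linarith
        have hfinal := (hA1.2.2 (k₁ + s + t)).2 (j (s + 1) - j s) habs
          ⟨hmemδ, h1⟩
        have hidx2 : k₁ + s + t + 1 = k₁ + s + (t + 1) := by omega
        rw [← hidx2]
        exact hfinal
  have hvK : (R.toEquiv ^ (-(j 0))) z ∈ limitK 𝓔 := by
    simp only [limitK, Set.mem_iInter]
    intro n
    rcases le_or_gt k₁ n with h | h
    · have hk := key (n - k₁) 0
      have hidx : k₁ + 0 + (n - k₁) = n := by omega
      rwa [hidx] at hk
    · have hk := key 0 0
      have hidx : k₁ + 0 + 0 = k₁ := by omega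
      rw [hidx] at hk
      exact E0_mono hA1.2.2 (le_of_lt h) hk
  refine ⟨j 0, (R.toEquiv ^ (-(j 0))) z, hvK, ?_⟩
  rw [zpow_apply_zpow]
  have harg : j 0 + -(j 0) = 0 := by ring
  rw [harg, zpow_zero, Equiv.Perm.coe_one, id_eq]

lemma eventually_not_open [LocallyConnectedSpace M] [Nonempty M]
    (hrect : ∀ n, IsRectCollection d (𝓔 n)) (hB4 : HypB4 𝓔 Mseq) :
    ∃ n₀ : ℕ, ∀ k, n₀ ≤ k → ∀ X ∈ 𝓔 k, ¬ IsOpen X := by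
  obtain ⟨r₀, hr₀, hball⟩ := exists_uniform_radius (M := M)
  obtain ⟨N, hN⟩ := hB4 (r₀ / 2) (by linarith)
  refine ⟨N, fun k hk X hX hop => ?_⟩
  have hXrect := (hrect k).2.1 X hX
  have hQclopen : IsClopen ((Psi Mseq k) ⁻¹' X) :=
    ⟨((rect_isCompact hXrect).isClosed).preimage (Psi Mseq k).continuous,
      hop.preimage (Psi Mseq k).continuous⟩
  obtain ⟨x₀, hx₀⟩ := rect_nonempty hXrect
  have happ : Psi Mseq k ((Psi Mseq k).symm x₀) = x₀ := Homeomorph.apply_symm_apply _ _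
  have hQne : ((Psi Mseq k) ⁻¹' X).Nonempty :=
    ⟨(Psi Mseq k).symm x₀, by rw [Set.mem_preimage, happ]; exact hx₀⟩
  obtain ⟨p, hp⟩ := hQne
  have hsub : Metric.ball p r₀ ⊆ (Psi Mseq k) ⁻¹' collUnion (𝓔 k) :=
    Set.Subset.trans (hball _ hQclopen p hp)
      (Set.preimage_mono (Set.subset_sUnion_of_mem hX))
  have := hN k hk p r₀ hsub
  linarith

lemma H2 (hrect : ∀ n, IsRectCollection d (𝓔 n)) (hA1 : HypA1 R 𝓔)
    (hB1 : HypB1 R 𝓔 Mseq) {n₀ : ℕ} (hNO : ∀ j, n₀ ≤ j → ∀ X ∈ 𝓔 j, ¬ IsOpen X)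
    {Ψ : M → M} (hΨ : TendstoUniformly (fun n => ⇑(Psi Mseq n)) Ψ Filter.atTop)
    {u : M} (hu : Ψ u ∈ limitK 𝓔) {n : ℕ} (hn : n₀ ≤ n) :
    Psi Mseq n u ∈ collUnion (𝓔 n) := by
  classical
  simp only [limitK, Set.mem_iInter] at hu
  by_cases hc : ∃ k, n ≤ k ∧ Psi Mseq k u ∈ collUnion (iterColl R (𝓔 k) k)
  · obtain ⟨hkn, hkact⟩ := Nat.find_spec hc
    have hfr : Psi Mseq (Nat.find hc) u = Psi Mseq n u :=
      freeze hB1 _ hkn (fun j hj hjk hmem => Nat.find_min hc hjk ⟨hj, hmem⟩)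
    obtain ⟨Y, hYfam, hmemY⟩ := hkact
    have hstay := stay hrect hA1 hB1 hNO (le_trans hn hkn) hYfam hmemY
    have hΨY : Ψ u ∈ Y :=
      limit_mem_of_stay hΨ (iterColl_isClosed (hrect _).2.1 hYfam) hstay
    obtain ⟨X', hX', hΨX'⟩ := hu (Nat.find hc)
    have hYX : Y = X' :=
      iterColl_eq_of_inter (hA1.1 (Nat.find hc)).1 (Nat.le_succ _) hYfam
        (self_mem_iterColl hX' _) hΨY hΨX'
    have hfin : Psi Mseq n u ∈ X' := by
      rw [← hYX, ← hfr]
      exact hmemY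
    exact E0_mono hA1.2.2 hkn (Set.subset_sUnion_of_mem hX' hfin)
  · push_neg at hc
    have hval : Psi Mseq n u = Ψ u :=
      typeI_value hB1 hΨ (fun m hm => hc m hm) n (le_refl n)
    rw [hval]
    exact hu n

lemma fiber_eq (hrect : ∀ n, IsRectCollection d (𝓔 n)) (hA1 : HypA1 R 𝓔)
    (hB1 : HypB1 R 𝓔 Mseq) (hB3 : HypB3 R 𝓔 Mseq)
    {n₀ : ℕ} (hNO : ∀ j, n₀ ≤ j → ∀ X ∈ 𝓔 j, ¬ IsOpen X)
    {Ψ : M → M} (hΨ : TendstoUniformly (fun n => ⇑(Psi Mseq n)) Ψ Filter.atTop)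
    {z u w : M} (hu : Ψ u = z) (hw : Ψ w = z)
    (hz : ∀ jj : ℤ, z ∉ (R.toEquiv ^ jj) '' limitK 𝓔) : u = w := by
  classical
  have hIIa : ∀ v : M, Ψ v = z →
      ¬ ∃ n, n₀ ≤ n ∧ ∀ m, n ≤ m → Psi Mseq m v ∈ collUnion (iterColl R (𝓔 m) m) := by
    rintro v hv ⟨n, hn, hall⟩
    have hzE : ∀ k, n ≤ k → z ∈ collUnion (iterColl R (𝓔 k) k) := by
      intro k hk
      obtain ⟨Y, hYfam, hmY⟩ := hall k hk
      have hstay := stay hrect hA1 hB1 hNO (le_trans hn hk) hYfam hmY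
      have hΨY : Ψ v ∈ Y :=
        limit_mem_of_stay hΨ (iterColl_isClosed (hrect _).2.1 hYfam) hstay
      exact ⟨Y, hYfam, hv ▸ hΨY⟩
    obtain ⟨jj, hjj⟩ := LAD hA1 hzE
    exact hz jj hjj
  have hclass : ∀ v : M, Ψ v = z →
      (∃ n, ∀ m, n ≤ m → Psi Mseq m v ∉ collUnion (iterColl R (𝓔 m) m)) ∨
      ((∀ n, ∃ m, n ≤ m ∧ Psi Mseq m v ∈ collUnion (iterColl R (𝓔 m) m)) ∧
       (∀ n, ∃ m, n ≤ m ∧ Psi Mseq m v ∉ collUnion (iterColl R (𝓔 m) m))) := by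
    intro v hv
    by_cases h1 : ∃ n, ∀ m, n ≤ m → Psi Mseq m v ∉ collUnion (iterColl R (𝓔 m) m)
    · exact Or.inl h1
    · push_neg at h1
      refine Or.inr ⟨fun n => ?_, fun n => ?_⟩
      · obtain ⟨m, hm1, hm2⟩ := h1 n
        exact ⟨m, hm1, hm2⟩
      · by_contra h2
        push_neg at h2
        refine hIIa v hv ⟨max n n₀, le_max_right _ _, fun m hm => ?_⟩
        exact h2 m (le_trans (le_max_left _ _) hm)
  rcases hclass u hu with hU | hU <;> rcases hclass w hw with hW | hW
  · -- both eventually frozen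
    obtain ⟨nu, hnu⟩ := hU
    obtain ⟨nw, hnw⟩ := hW
    have h1 : Psi Mseq (max nu nw) u = Ψ u :=
      typeI_value hB1 hΨ hnu (max nu nw) (le_max_left _ _)
    have h2 : Psi Mseq (max nu nw) w = Ψ w :=
      typeI_value hB1 hΨ hnw (max nu nw) (le_max_right _ _)
    exact (Psi Mseq (max nu nw)).injective (by rw [h1, h2, hu, hw])
  · -- u frozen, w mixed
    obtain ⟨nu, hnu⟩ := hU
    refine eq_of_forall_dist_le (fun ε hε => ?_)
    obtain ⟨N₃, hN₃⟩ := hB3 (ε / 2) (by linarith)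
    obtain ⟨m₀, hm₀, Y, hYit, hYnew, hwm, hΨwY, -⟩ :=
      entry hrect hA1 hB1 hNO hΨ hW.1 hW.2
        (le_max_right (max nu N₃) n₀ : n₀ ≤ max (max nu N₃) n₀)
    have hdiam := hN₃ m₀ (le_trans (le_trans (le_max_right nu N₃)
      (le_max_left (max nu N₃) n₀)) hm₀) Y ⟨hYit, hYnew⟩
    have hwmem : w ∈ (Psi Mseq m₀) ⁻¹' Y := hwm
    have humem : u ∈ (Psi Mseq m₀) ⁻¹' Y := by
      have hval : Psi Mseq m₀ u = Ψ u :=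
        typeI_value hB1 hΨ hnu m₀
          (le_trans (le_trans (le_max_left nu N₃) (le_max_left (max nu N₃) n₀)) hm₀)
      show Psi Mseq m₀ u ∈ Y
      rw [hval, hu, ← hw]
      exact hΨwY
    have hdist : dist u w ≤ ε / 2 :=
      le_trans (Metric.dist_le_diam_of_mem Metric.isBounded_of_compactSpace humem hwmem) hdiam
    linarith
  · -- u mixed, w frozen
    obtain ⟨nw, hnw⟩ := hW
    refine eq_of_forall_dist_le (fun ε hε => ?_)
    obtain ⟨N₃, hN₃⟩ := hB3 (ε / 2) (by linarith)
    obtain ⟨m₀, hm₀, Y, hYit, hYnew, hum, hΨuY, -⟩ :=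
      entry hrect hA1 hB1 hNO hΨ hU.1 hU.2
        (le_max_right (max nw N₃) n₀ : n₀ ≤ max (max nw N₃) n₀)
    have hdiam := hN₃ m₀ (le_trans (le_trans (le_max_right nw N₃)
      (le_max_left (max nw N₃) n₀)) hm₀) Y ⟨hYit, hYnew⟩
    have humem : u ∈ (Psi Mseq m₀) ⁻¹' Y := hum
    have hwmem : w ∈ (Psi Mseq m₀) ⁻¹' Y := by
      have hval : Psi Mseq m₀ w = Ψ w :=
        typeI_value hB1 hΨ hnw m₀
          (le_trans (le_trans (le_max_left nw N₃) (le_max_left (max nw N₃) n₀)) hm₀)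
      show Psi Mseq m₀ w ∈ Y
      rw [hval, hw, ← hu]
      exact hΨuY
    have hdist : dist u w ≤ ε / 2 :=
      le_trans (Metric.dist_le_diam_of_mem Metric.isBounded_of_compactSpace humem hwmem) hdiam
    linarith
  · -- both mixed
    refine eq_of_forall_dist_le (fun ε hε => ?_)
    obtain ⟨N₃, hN₃⟩ := hB3 (ε / 2) (by linarith)
    obtain ⟨m₀, hm₀, Y, hYit, hYnew, hum, hΨuY, htrapY⟩ :=
      entry hrect hA1 hB1 hNO hΨ hU.1 hU.2
        (le_max_right N₃ n₀ : n₀ ≤ max N₃ n₀)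
    obtain ⟨s₀, hs₀, W, hWit, hWnew, hwm, hΨwW, -⟩ :=
      entry hrect hA1 hB1 hNO hΨ hW.1 hW.2
        (le_trans (le_max_right N₃ n₀) (le_max_right m₀ (max N₃ n₀)) :
          n₀ ≤ max m₀ (max N₃ n₀))
    have hm₀N₃ : N₃ ≤ m₀ := le_trans (le_max_left N₃ n₀) hm₀
    have hs₀N₃ : N₃ ≤ s₀ := le_trans (le_trans (le_max_left N₃ n₀)
      (le_max_right m₀ (max N₃ n₀))) hs₀
    have hm₀s₀ : m₀ ≤ s₀ := le_trans (le_max_left m₀ (max N₃ n₀)) hs₀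
    have hdiamY := hN₃ m₀ hm₀N₃ Y ⟨hYit, hYnew⟩
    have hdiamW := hN₃ s₀ hs₀N₃ W ⟨hWit, hWnew⟩
    set q := (Psi Mseq s₀).symm z with hqdef
    have hq : Psi Mseq s₀ q = z := Homeomorph.apply_symm_apply _ _
    have hqW : q ∈ (Psi Mseq s₀) ⁻¹' W := by
      show Psi Mseq s₀ q ∈ W
      rw [hq, ← hw]
      exact hΨwW
    have hwW : w ∈ (Psi Mseq s₀) ⁻¹' W := hwm
    have hqY : q ∈ (Psi Mseq m₀) ⁻¹' Y := by
      show Psi Mseq m₀ q ∈ Y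
      refine htrapY s₀ hm₀s₀ q ?_
      rw [hq, ← hu]
      exact hΨuY
    have huY : u ∈ (Psi Mseq m₀) ⁻¹' Y := hum
    have hd1 : dist u q ≤ ε / 2 :=
      le_trans (Metric.dist_le_diam_of_mem Metric.isBounded_of_compactSpace huY hqY) hdiamY
    have hd2 : dist w q ≤ ε / 2 :=
      le_trans (Metric.dist_le_diam_of_mem Metric.isBounded_of_compactSpace hwW hqW) hdiamW
    have htri : dist u w ≤ dist u q + dist q w := dist_triangle u q w
    rw [dist_comm q w] at htri
    linarith

end Dyn

end BCLAux

/-- Under hypotheses `A₁`, `A₃`, `B₁`–`B₄`, any compact `g`-invariant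
subset `F ⊆ M` with `Ψ(F) = M` is equal to `M`. -/
theorem invariant_compact_onto_eq_univ (d : ℕ) (M : Type*) [MetricSpace M] [CompactSpace M]
    [ChartedSpace (EuclideanSpace ℝ (Fin d)) M]
    (R : M ≃ₜ M) (𝓔 : ℕ → Set (Set M)) (hrect : ∀ n, IsRectCollection d (𝓔 n))
    (hA1 : HypA1 R 𝓔) (hA3 : HypA3 R 𝓔) (hEdge : EdgelessGraph R (𝓔 0))
    (Mseq : ℕ → M ≃ₜ M)
    (hB1 : HypB1 R 𝓔 Mseq) (hB2 : HypB2 R 𝓔 Mseq) (hB3 : HypB3 R 𝓔 Mseq)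
    (hB4 : HypB4 𝓔 Mseq)
    (Ψ : M → M) (hΨc : Continuous Ψ)
    (hΨ : TendstoUniformly (fun n => ⇑(Psi Mseq n)) Ψ Filter.atTop)
    (g : M ≃ₜ M)
    (hg : TendstoUniformly (fun n => ⇑(gSeq R Mseq n)) (⇑g) Filter.atTop)
    (F : Set M) (hFcomp : IsCompact F) (hFinv : (g : M → M) '' F = F)
    (hFonto : Ψ '' F = Set.univ) :
    F = Set.univ := by
  classical
  rcases isEmpty_or_nonempty M with hM | hM
  · exact Set.eq_univ_of_forall (fun x => (IsEmpty.false x).elim)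
  haveI : LocallyConnectedSpace M :=
    ChartedSpace.locallyConnectedSpace (EuclideanSpace ℝ (Fin d)) M
  obtain ⟨n₀, hNO⟩ := BCLAux.eventually_not_open hrect hB4
  -- the semiconjugacy Ψ ∘ g = R ∘ Ψ
  have hsemi : ∀ x : M, Ψ (g x) = R (Ψ x) := by
    intro x
    have h1 : ∀ n : ℕ, Psi Mseq n (gSeq R Mseq n x) = R (Psi Mseq n x) := by
      intro n
      show Psi Mseq n ((Psi Mseq n).symm (R (Psi Mseq n x))) = R (Psi Mseq n x)
      exact Homeomorph.apply_symm_apply _ _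
    have hL : Filter.Tendsto (fun n => Psi Mseq n (gSeq R Mseq n x)) Filter.atTop
        (nhds (Ψ (g x))) :=
      hΨ.tendsto_comp hΨc.continuousAt (hg.tendsto_at x)
    have hR : Filter.Tendsto (fun n => R (Psi Mseq n x)) Filter.atTop (nhds (R (Ψ x))) :=
      (R.continuous.tendsto _).comp (hΨ.tendsto_at x)
    have hL' : Filter.Tendsto (fun n => Psi Mseq n (gSeq R Mseq n x)) Filter.atTop
        (nhds (R (Ψ x))) := hR.congr (fun n => (h1 n).symm)
    exact tendsto_nhds_unique hL hL'
  have hsymm : ∀ x : M, Ψ (g.symm x) = R.symm (Ψ x) := by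
    intro x
    have h1 := hsemi (g.symm x)
    rw [Homeomorph.apply_symm_apply] at h1
    have h2 := congrArg R.symm h1
    rw [Homeomorph.symm_apply_apply] at h2
    exact h2.symm
  have hsemj : ∀ jj : ℤ, ∀ x : M, Ψ ((g.toEquiv ^ jj) x) = (R.toEquiv ^ jj) (Ψ x) := by
    intro jj
    induction jj using Int.induction_on with
    | zero =>
        intro x
        simp only [zpow_zero, Equiv.Perm.coe_one, id_eq]
    | succ n ih =>
        intro x
        rw [zpow_add_one, zpow_add_one, Equiv.Perm.mul_apply, Equiv.Perm.mul_apply]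
        have hgx : (g.toEquiv : M → M) x = g x := rfl
        have hRx : (R.toEquiv : M → M) (Ψ x) = R (Ψ x) := rfl
        rw [hgx, hRx, ih (g x), hsemi x]
    | pred n ih =>
        intro x
        rw [zpow_sub_one, zpow_sub_one, Equiv.Perm.mul_apply, Equiv.Perm.mul_apply]
        have hgx : g.toEquiv⁻¹ x = g.symm x := rfl
        have hRx : R.toEquiv⁻¹ (Ψ x) = R.symm (Ψ x) := rfl
        rw [hgx, hRx, ih (g.symm x), hsymm x]
  -- the Cantor-like set K and the preimages of its iterates
  have hKclosed : IsClosed (limitK 𝓔) := by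
    refine isClosed_iInter (fun n => ?_)
    exact BCLAux.collUnion_isClosed (hrect n).1
      (fun X hX => (BCLAux.rect_isCompact ((hrect n).2.1 X hX)).isClosed)
  have hKcompact : IsCompact (limitK 𝓔) := hKclosed.isCompact
  have hA0 : interior (Ψ ⁻¹' limitK 𝓔) = ∅ := by
    by_contra hne
    obtain ⟨c, hc⟩ := Set.nonempty_iff_ne_empty.mpr hne
    obtain ⟨r, hr, hball⟩ := Metric.isOpen_iff.mp isOpen_interior c hc
    obtain ⟨N₄, hN₄⟩ := hB4 (r / 2) (by linarith)
    have hsub : Metric.ball c r ⊆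
        (Psi Mseq (max n₀ N₄)) ⁻¹' collUnion (𝓔 (max n₀ N₄)) := by
      intro p hp
      have hpK : Ψ p ∈ limitK 𝓔 :=
        (interior_subset (hball hp) : p ∈ Ψ ⁻¹' limitK 𝓔)
      exact BCLAux.H2 hrect hA1 hB1 hNO hΨ hpK (le_max_left _ _)
    have := hN₄ (max n₀ N₄) (le_max_right _ _) c r hsub
    linarith
  have hAj : ∀ jj : ℤ, interior (Ψ ⁻¹' ((R.toEquiv ^ jj) '' limitK 𝓔)) = ∅ := by
    intro jj
    have hset : Ψ ⁻¹' ((R.toEquiv ^ jj) '' limitK 𝓔) =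
        (BCLAux.zhomeo g jj) '' (Ψ ⁻¹' limitK 𝓔) := by
      ext x
      simp only [Set.mem_preimage, Set.mem_image, BCLAux.zhomeo_apply]
      constructor
      · intro hx
        refine ⟨(g.toEquiv ^ (-jj)) x, ?_, ?_⟩
        · show Ψ ((g.toEquiv ^ (-jj)) x) ∈ limitK 𝓔
          rw [hsemj (-jj) x]
          obtain ⟨y, hy, hye⟩ := hx
          rw [← hye, BCLAux.zpow_neg_apply_zpow]
          exact hy
        · rw [BCLAux.zpow_apply_zpow]
          have harg : jj + -jj = 0 := by ring
          rw [harg, zpow_zero, Equiv.Perm.coe_one, id_eq]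
      · rintro ⟨y, hy, rfl⟩
        rw [hsemj jj y]
        exact ⟨Ψ y, hy, rfl⟩
    rw [hset, ← Homeomorph.image_interior, hA0, Set.image_empty]
  have hDense : Dense (⋂ jj : ℤ, (Ψ ⁻¹' ((R.toEquiv ^ jj) '' limitK 𝓔))ᶜ) := by
    refine dense_iInter_of_isOpen (fun jj => ?_) (fun jj => ?_)
    · have hcl : IsClosed (Ψ ⁻¹' ((R.toEquiv ^ jj) '' limitK 𝓔)) :=
        IsClosed.preimage hΨc ((hKcompact.image (BCLAux.cont_zpow R jj)).isClosed)
      exact hcl.isOpen_compl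
    · exact interior_eq_empty_iff_dense_compl.mp (hAj jj)
  -- conclusion
  by_contra hFne
  obtain ⟨y₀, hy₀⟩ : ∃ y₀, y₀ ∉ F := by
    by_contra hall
    push_neg at hall
    exact hFne (Set.eq_univ_of_forall hall)
  have hFclosed : IsClosed F := hFcomp.isClosed
  obtain ⟨ρ, hρ, hballF⟩ := Metric.isOpen_iff.mp hFclosed.isOpen_compl y₀ hy₀
  obtain ⟨x, hxD, hxball⟩ := hDense.exists_mem_open Metric.isOpen_ball
    ⟨y₀, Metric.mem_ball_self hρ⟩
  have hzK : ∀ jj : ℤ, Ψ x ∉ (R.toEquiv ^ jj) '' limitK 𝓔 := by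
    intro jj hmem
    exact (Set.mem_iInter.mp hxD jj) hmem
  have hxz : Ψ x ∈ Ψ '' F := by
    rw [hFonto]
    trivial
  obtain ⟨f, hfF, hfx⟩ := hxz
  have hfeq : f = x :=
    BCLAux.fiber_eq hrect hA1 hB1 hB3 hNO hΨ hfx rfl hzK
  rw [hfeq] at hfF
  exact (hballF hxball) hfF

end
end

section
/- Let M be a compact topological manifold of dimension d ≥ 2, R a homeomorphism of M, (𝓔ₙ⁰)_{n∈ℕ} a sequence of collections of rectangles satisfying hypotheses A₁, A₂, A₃, with 𝓖(𝓔₀⁰) edgeless and 𝓔₀⁰ a single rectangle X₀, K = ⋂ₙ Eₙ⁰, C a Cantor set and K × C tamely embedded in Int X₀. Let (Mₙ)_{n≥1} be homeomorphisms of M satisfying hypotheses B₁, B₂, B₃, B₅ and B₆, and let g = lim gₙ. Then the restriction of g to ⋃_{n∈ℤ} gⁿ(K × C) is isomorphic, as a measurable dynamical system, to the restriction of R × Id_C to ⋃_{n∈ℤ} Rⁿ(K) × C. -/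
open Set Function MeasureTheory Topology Filter

noncomputable section

variable {M : Type*}

section B56
variable [TopologicalSpace M] {C : Type*}

/-- Hypothesis B₅ (Cantor sets in the fibres of `Ψ`): for every rectangle `X ∈ 𝓔ₙ⁰`,
the set `Ψₙ⁻¹(Int X)` contains the embedded Cantor set `K_X × C`. -/
def HypB5 (R : M ≃ₜ M) (𝓔 : ℕ → Set (Set M)) (e : ↥(limitK 𝓔) × C → M)
    (Mseq : ℕ → M ≃ₜ M) : Prop :=
  ∀ n : ℕ, ∀ X ∈ 𝓔 n,
    e '' {p : ↥(limitK 𝓔) × C | (p.1 : M) ∈ X} ⊆ (Psi Mseq n) ⁻¹' interior X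

/-- Hypothesis B₆ (embedding a trivial dynamics): if `X → ⋯ → X' = R^p(X)` is a path in the
graph `𝓖(𝓔ₙⁿ)` with `X, X' ∈ 𝓔ₙ⁰`, then `gₙ^p(x, c) = (R^p(x), c)` on `K_X × C`. -/
def HypB6 (R : M ≃ₜ M) (𝓔 : ℕ → Set (Set M)) (e : ↥(limitK 𝓔) × C → M)
    (Mseq : ℕ → M ≃ₜ M) : Prop :=
  ∀ n : ℕ, ∀ X ∈ 𝓔 n, ∀ p : ℕ,
    (∀ i : ℕ, i ≤ p → (R.toEquiv ^ (i : ℤ)) '' X ∈ iterColl R (𝓔 n) n) →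
    (R.toEquiv ^ (p : ℤ)) '' X ∈ 𝓔 n →
    ∀ (x : ↥(limitK 𝓔)) (c : C), (x : M) ∈ X →
      ∀ hx' : (R.toEquiv ^ (p : ℤ)) (x : M) ∈ limitK 𝓔,
        (⇑(gSeq R Mseq n))^[p] (e (x, c)) = e (⟨(R.toEquiv ^ (p : ℤ)) (x : M), hx'⟩, c)

end B56


/-! ### Auxiliary lemmas -/

section AuxLemmas

variable [MetricSpace M]

lemma gSeq_toEquiv_zpow (R : M ≃ₜ M) (Mseq : ℕ → M ≃ₜ M) (n : ℕ) (j : ℤ) (y : M) :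
    ((gSeq R Mseq n).toEquiv ^ j) y
      = (Psi Mseq n).symm ((R.toEquiv ^ j) ((Psi Mseq n) y)) := by
  have h1 : (gSeq R Mseq n).toEquiv
      = (Psi Mseq n).toEquiv⁻¹ * R.toEquiv * ((Psi Mseq n).toEquiv⁻¹)⁻¹ := by
    ext x
    simp [gSeq, Equiv.Perm.mul_apply, Equiv.Perm.inv_def]
  rw [h1, conj_zpow]
  simp [Equiv.Perm.mul_apply, Equiv.Perm.inv_def]

lemma perm_zpow_natCast_iterate (f : M ≃ₜ M) (i : ℕ) (y : M) :
    (f.toEquiv ^ (i : ℤ)) y = (⇑f)^[i] y := by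
  rw [zpow_natCast, ← Equiv.Perm.iterate_eq_pow]
  rfl

lemma zpow_apply_succ (R : M ≃ₜ M) (k : ℤ) (w : M) :
    (R.toEquiv ^ (k + 1)) w = R ((R.toEquiv ^ k) w) := by
  rw [show k + 1 = 1 + k by ring, zpow_add, zpow_one, Equiv.Perm.mul_apply]
  rfl

lemma image_R_zpow (R : M ≃ₜ M) (k : ℤ) (X : Set M) :
    (⇑R) '' ((R.toEquiv ^ k) '' X) = (R.toEquiv ^ (k + 1)) '' X := by
  rw [← Set.image_comp]
  apply Set.image_congr
  intro x _
  exact (zpow_apply_succ R k x).symm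

lemma Mseq_comm_zpow (R : M ≃ₜ M) (𝓔 : ℕ → Set (Set M)) (Mseq : ℕ → M ≃ₜ M)
    (hB2 : HypB2 R 𝓔 Mseq) (n : ℕ) (X : Set M) (hX : X ∈ 𝓔 n) :
    ∀ j : ℤ, |j| ≤ (n : ℤ) → ∀ w ∈ X,
      Mseq (n + 1) ((R.toEquiv ^ j) w) = (R.toEquiv ^ j) (Mseq (n + 1) w) := by
  have hmem : ∀ k : ℤ, |k| ≤ (n : ℤ) → (R.toEquiv ^ k) '' X ∈ iterColl R (𝓔 n) n :=
    fun k hk => ⟨k, hk, X, hX, rfl⟩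
  have key : ∀ k : ℤ, |k| ≤ (n : ℤ) → |k + 1| ≤ (n : ℤ) → ∀ w ∈ X,
      Mseq (n + 1) ((R.toEquiv ^ (k + 1)) w) = R (Mseq (n + 1) ((R.toEquiv ^ k) w)) := by
    intro k hk hk1 w hw
    have h2 : (⇑R) '' ((R.toEquiv ^ k) '' X) ∈ iterColl R (𝓔 n) n := by
      rw [image_R_zpow]; exact hmem _ hk1
    have := hB2 n _ (hmem k hk) h2 ((R.toEquiv ^ k) w) ⟨w, hw, rfl⟩
    rw [zpow_apply_succ]
    exact this
  have hpos : ∀ i : ℕ, (i : ℤ) ≤ (n : ℤ) → ∀ w ∈ X,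
      Mseq (n + 1) ((R.toEquiv ^ (i : ℤ)) w) = (R.toEquiv ^ (i : ℤ)) (Mseq (n + 1) w) := by
    intro i
    induction i with
    | zero => intro _ w _; simp
    | succ i ih =>
      intro hi w hw
      have hi' : (i : ℤ) ≤ (n : ℤ) := by push_cast at hi ⊢; omega
      have h1 := key (i : ℤ) (by rw [abs_of_nonneg (by positivity)]; exact hi')
        (by rw [abs_of_nonneg (by positivity)]; push_cast at hi; omega) w hw
      rw [show ((i + 1 : ℕ) : ℤ) = (i : ℤ) + 1 by push_cast; ring, h1, ih hi' w hw,
        zpow_apply_succ]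
  have hneg : ∀ i : ℕ, (i : ℤ) ≤ (n : ℤ) → ∀ w ∈ X,
      Mseq (n + 1) ((R.toEquiv ^ (-(i : ℤ))) w) = (R.toEquiv ^ (-(i : ℤ))) (Mseq (n + 1) w) := by
    intro i
    induction i with
    | zero => intro _ w _; simp
    | succ i ih =>
      intro hi w hw
      have hi' : (i : ℤ) ≤ (n : ℤ) := by push_cast at hi ⊢; omega
      have h1 := key (-(i + 1 : ℤ))
        (by rw [abs_neg, abs_of_nonneg (by positivity)]; push_cast at hi; omega)
        (by rw [show -(i + 1 : ℤ) + 1 = -(i : ℤ) by ring, abs_neg,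
              abs_of_nonneg (by positivity)]; omega) w hw
      rw [show -(i + 1 : ℤ) + 1 = -(i : ℤ) by ring] at h1
      have h2 : Mseq (n + 1) ((R.toEquiv ^ (-(i : ℤ))) w)
          = (R.toEquiv ^ (-(i : ℤ))) (Mseq (n + 1) w) := ih hi' w hw
      rw [h2] at h1
      have h3 : Mseq (n + 1) ((R.toEquiv ^ (-(i + 1 : ℤ))) w)
          = R.symm ((R.toEquiv ^ (-(i : ℤ))) (Mseq (n + 1) w)) := by
        rw [h1]; exact (R.symm_apply_apply _).symm
      rw [show ((-(i + 1 : ℕ) : ℤ)) = (-(i + 1 : ℤ)) by push_cast; ring]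
      rw [h3]
      have h4 : (R.toEquiv ^ (-(i + 1 : ℤ))) (Mseq (n + 1) w)
          = R.symm ((R.toEquiv ^ (-(i : ℤ))) (Mseq (n + 1) w)) := by
        apply R.injective
        rw [Homeomorph.apply_symm_apply, ← zpow_apply_succ,
          show -(i + 1 : ℤ) + 1 = -(i : ℤ) by ring]
      rw [h4]
  intro j hj w hw
  obtain ⟨i, rfl | rfl⟩ := j.eq_nat_or_neg
  · exact hpos i (by rwa [abs_of_nonneg (Int.natCast_nonneg i)] at hj) w hw
  · exact hneg i (by rwa [abs_neg, abs_of_nonneg (Int.natCast_nonneg i)] at hj) w hw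

lemma tendsto_iterate [CompactSpace M] (g : M ≃ₜ M) (F : ℕ → M ≃ₜ M)
    (hg : TendstoUniformly (fun n => ⇑(F n)) (⇑g) atTop) (i : ℕ) (y : M) :
    Tendsto (fun n => (⇑(F n))^[i] y) atTop (𝓝 ((⇑g)^[i] y)) := by
  induction i generalizing y with
  | zero => simpa using tendsto_const_nhds
  | succ i ih =>
    have h1 : Tendsto (fun n => g ((⇑(F n))^[i] y)) atTop (𝓝 ((⇑g)^[i+1] y)) := by
      rw [Function.iterate_succ_apply']
      exact (g.continuous.tendsto _).comp (ih y)
    have h2 : Tendsto (fun n => dist (g ((⇑(F n))^[i] y)) ((F n) ((⇑(F n))^[i] y)))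
        atTop (𝓝 0) := by
      rw [Metric.tendsto_nhds]
      intro ε hε
      filter_upwards [Metric.tendstoUniformly_iff.1 hg ε hε] with n hn
      simpa [Real.dist_eq, abs_of_nonneg dist_nonneg] using hn _
    have := h1.congr_dist h2
    simpa [Function.iterate_succ_apply'] using this

lemma limitK_subset (𝓔 : ℕ → Set (Set M)) (n : ℕ) : limitK 𝓔 ⊆ collUnion (𝓔 n) :=
  fun _ h => Set.mem_iInter.1 h n

lemma collUnion_anti (R : M ≃ₜ M) (𝓔 : ℕ → Set (Set M))
    (hcomp : ∀ n, CompatibleFor R (𝓔 (n + 1)) (𝓔 n) (n + 1)) {m n : ℕ} (h : m ≤ n) :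
    collUnion (𝓔 n) ⊆ collUnion (𝓔 m) := by
  induction n, h using Nat.le_induction with
  | base => exact subset_rfl
  | succ n hn ih => exact subset_trans (hcomp n).1 ih

lemma IsRectangle.isCompact {d : ℕ} {X : Set M} (h : IsRectangle d X) : IsCompact X := by
  obtain ⟨f⟩ := h
  haveI : CompactSpace (Metric.closedBall (0 : EuclideanSpace ℝ (Fin d)) 1 :
      Set (EuclideanSpace ℝ (Fin d))) :=
    isCompact_iff_compactSpace.1 (isCompact_closedBall _ _)
  haveI : CompactSpace X := f.symm.compactSpace
  exact isCompact_iff_compactSpace.2 this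

lemma isClosed_collUnion {d : ℕ} {𝓔 : Set (Set M)} (h : IsRectCollection d 𝓔) :
    IsClosed (collUnion 𝓔) := by
  rw [collUnion, Set.sUnion_eq_biUnion]
  exact Set.Finite.isClosed_biUnion h.1 (fun X hX => ((h.2.1 X hX).isCompact).isClosed)

lemma isCompact_limitK [CompactSpace M] {d : ℕ} {𝓔 : ℕ → Set (Set M)}
    (h : ∀ n, IsRectCollection d (𝓔 n)) : IsCompact (limitK 𝓔) := by
  have : IsClosed (limitK 𝓔) := isClosed_iInter (fun n => isClosed_collUnion (h n))
  exact this.isCompact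

lemma continuous_homeo_zpow (g : M ≃ₜ M) (n : ℤ) : Continuous ⇑(g.toEquiv ^ n) := by
  induction n using Int.induction_on with
  | zero => simpa using continuous_id
  | succ i ih =>
    have h : ⇑(g.toEquiv ^ ((i : ℤ) + 1)) = ⇑g ∘ ⇑(g.toEquiv ^ (i : ℤ)) := by
      ext x
      rw [show (i : ℤ) + 1 = 1 + (i : ℤ) by ring, zpow_add, zpow_one, Equiv.Perm.mul_apply]
      rfl
    rw [h]; exact g.continuous.comp ih
  | pred i ih =>
    have h : ⇑(g.toEquiv ^ (-(i : ℤ) - 1)) = ⇑g.symm ∘ ⇑(g.toEquiv ^ (-(i : ℤ))) := by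
      ext x
      rw [show -(i : ℤ) - 1 = -1 + -(i : ℤ) by ring, zpow_add, zpow_neg_one,
        Equiv.Perm.mul_apply]
      rfl
    rw [h]; exact g.symm.continuous.comp ih

section KeyLemmas
variable {C : Type*} [TopologicalSpace C] [CompactSpace M]
variable (R : M ≃ₜ M) (𝓔 : ℕ → Set (Set M)) (e : ↥(limitK 𝓔) × C → M) (Mseq : ℕ → M ≃ₜ M)
  (g : M ≃ₜ M)

lemma starEq (hB2 : HypB2 R 𝓔 Mseq) (hB5 : HypB5 R 𝓔 e Mseq)
    (hg : TendstoUniformly (fun n => ⇑(gSeq R Mseq n)) (⇑g) Filter.atTop)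
    (q : ↥(limitK 𝓔) × C) (j : ℤ) (n : ℕ) (hjn : |j| ≤ (n : ℤ)) :
    (g.toEquiv ^ j) (e q) = ((gSeq R Mseq n).toEquiv ^ j) (e q) := by
  have stab : ∀ m : ℕ, |j| ≤ (m : ℤ) →
      ((gSeq R Mseq (m + 1)).toEquiv ^ j) (e q) = ((gSeq R Mseq m).toEquiv ^ j) (e q) := by
    intro m hm
    obtain ⟨X, hX, hq⟩ : ∃ X ∈ 𝓔 m, (q.1 : M) ∈ X := by
      have : (q.1 : M) ∈ collUnion (𝓔 m) := Set.mem_iInter.1 q.1.2 m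
      simpa [collUnion] using this
    have hw : (Psi Mseq m) (e q) ∈ X := by
      have := hB5 m X hX ⟨q, hq, rfl⟩
      exact interior_subset this
    have hcomm := Mseq_comm_zpow R 𝓔 Mseq hB2 m X hX j hm ((Psi Mseq m) (e q)) hw
    rw [gSeq_toEquiv_zpow, gSeq_toEquiv_zpow]
    have hpsi : ∀ y : M, (Psi Mseq (m + 1)) y = (Mseq (m + 1)) ((Psi Mseq m) y) :=
      fun _ => rfl
    have hpsi' : ∀ y : M, (Psi Mseq (m + 1)).symm y
        = (Psi Mseq m).symm ((Mseq (m + 1)).symm y) := fun _ => rfl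
    rw [hpsi, hpsi', ← hcomm, Homeomorph.symm_apply_apply]
  have hconst : ∀ m : ℕ, n ≤ m →
      ((gSeq R Mseq m).toEquiv ^ j) (e q) = ((gSeq R Mseq n).toEquiv ^ j) (e q) := by
    intro m hm
    induction m, hm using Nat.le_induction with
    | base => rfl
    | succ m hm ih => rw [stab m (le_trans hjn (by exact_mod_cast hm)), ih]
  obtain ⟨i, rfl | rfl⟩ := j.eq_nat_or_neg
  · have hlim : Tendsto (fun m => ((gSeq R Mseq m).toEquiv ^ (i : ℤ)) (e q)) atTop
        (𝓝 ((g.toEquiv ^ (i : ℤ)) (e q))) := by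
      simp only [perm_zpow_natCast_iterate]
      exact tendsto_iterate g _ hg i (e q)
    have hlim2 : Tendsto (fun m => ((gSeq R Mseq m).toEquiv ^ (i : ℤ)) (e q)) atTop
        (𝓝 (((gSeq R Mseq n).toEquiv ^ (i : ℤ)) (e q))) := by
      apply tendsto_const_nhds.congr'
      filter_upwards [eventually_ge_atTop n] with m hm
      exact (hconst m hm).symm
    exact tendsto_nhds_unique hlim hlim2
  · set v := ((gSeq R Mseq n).toEquiv ^ (-(i : ℤ))) (e q) with hv
    have hiter : ∀ m : ℕ, n ≤ m → (⇑(gSeq R Mseq m))^[i] v = e q := by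
      intro m hm
      rw [← perm_zpow_natCast_iterate, ← hconst m hm, ← Equiv.Perm.mul_apply, ← zpow_add]
      simp
    have hlim : Tendsto (fun m => (⇑(gSeq R Mseq m))^[i] v) atTop (𝓝 ((⇑g)^[i] v)) :=
      tendsto_iterate g _ hg i v
    have hlim2 : Tendsto (fun m => (⇑(gSeq R Mseq m))^[i] v) atTop (𝓝 (e q)) := by
      apply tendsto_const_nhds.congr'
      filter_upwards [eventually_ge_atTop n] with m hm
      exact (hiter m hm).symm
    have hgv : (g.toEquiv ^ (i : ℤ)) v = e q := by
      rw [perm_zpow_natCast_iterate]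
      exact tendsto_nhds_unique hlim hlim2
    calc (g.toEquiv ^ (-(i : ℤ))) (e q)
        = (g.toEquiv ^ (-(i : ℤ))) ((g.toEquiv ^ (i : ℤ)) v) := by rw [hgv]
      _ = v := by rw [← Equiv.Perm.mul_apply, ← zpow_add]; simp

lemma key_forward_nat
    (hIter : ∀ n, IterableColl R (𝓔 n) (n + 1))
    (hB2 : HypB2 R 𝓔 Mseq) (hB5 : HypB5 R 𝓔 e Mseq) (hB6 : HypB6 R 𝓔 e Mseq)
    (hg : TendstoUniformly (fun n => ⇑(gSeq R Mseq n)) (⇑g) Filter.atTop)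
    (p : ↥(limitK 𝓔)) (c : C) (i : ℕ)
    (hj : (R.toEquiv ^ (i : ℤ)) (p : M) ∈ limitK 𝓔) :
    (g.toEquiv ^ (i : ℤ)) (e (p, c)) = e (⟨(R.toEquiv ^ (i : ℤ)) (p : M), hj⟩, c) := by
  obtain ⟨X, hX, hp⟩ : ∃ X ∈ 𝓔 i, (p : M) ∈ X := by
    have : (p : M) ∈ collUnion (𝓔 i) := limitK_subset 𝓔 i p.2
    simpa [collUnion] using this
  have hpath : ∀ t : ℕ, t ≤ i → (R.toEquiv ^ (t : ℤ)) '' X ∈ iterColl R (𝓔 i) i :=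
    fun t ht => ⟨t, by rw [abs_of_nonneg (Int.natCast_nonneg t)]; exact_mod_cast ht, X, hX, rfl⟩
  obtain ⟨X', hX', hp'⟩ : ∃ X' ∈ 𝓔 i, (R.toEquiv ^ (i : ℤ)) (p : M) ∈ X' := by
    have : (R.toEquiv ^ (i : ℤ)) (p : M) ∈ collUnion (𝓔 i) := limitK_subset 𝓔 i hj
    simpa [collUnion] using this
  have hXX' : (R.toEquiv ^ (i : ℤ)) '' X = X' := by
    rcases hIter i X hX X' hX' (i : ℤ) 0
      (by rw [abs_of_nonneg (Int.natCast_nonneg i)]; omega) (by simp; omega) with hdisj | heq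
    · exfalso
      exact Set.disjoint_left.1 hdisj ⟨(p : M), hp, rfl⟩ (by simpa using hp')
    · simpa using heq
  have hB6' := hB6 i X hX i hpath (hXX' ▸ hX') p c hp hj
  rw [starEq R 𝓔 e Mseq g hB2 hB5 hg (p, c) (i : ℤ) i
    (by rw [abs_of_nonneg (Int.natCast_nonneg i)]), perm_zpow_natCast_iterate]
  exact hB6'

lemma key_forward
    (hIter : ∀ n, IterableColl R (𝓔 n) (n + 1))
    (hB2 : HypB2 R 𝓔 Mseq) (hB5 : HypB5 R 𝓔 e Mseq) (hB6 : HypB6 R 𝓔 e Mseq)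
    (hg : TendstoUniformly (fun n => ⇑(gSeq R Mseq n)) (⇑g) Filter.atTop)
    (p : ↥(limitK 𝓔)) (c : C) (j : ℤ)
    (hj : (R.toEquiv ^ j) (p : M) ∈ limitK 𝓔) :
    (g.toEquiv ^ j) (e (p, c)) = e (⟨(R.toEquiv ^ j) (p : M), hj⟩, c) := by
  obtain ⟨i, rfl | rfl⟩ := j.eq_nat_or_neg
  · exact key_forward_nat R 𝓔 e Mseq g hIter hB2 hB5 hB6 hg p c i hj
  · set p' : ↥(limitK 𝓔) := ⟨(R.toEquiv ^ (-(i : ℤ))) (p : M), hj⟩ with hp'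
    have h2 : (R.toEquiv ^ (i : ℤ)) (p' : M) ∈ limitK 𝓔 := by
      have heq : (R.toEquiv ^ (i : ℤ)) ((R.toEquiv ^ (-(i : ℤ))) (p : M)) = (p : M) := by
        rw [← Equiv.Perm.mul_apply, ← zpow_add]; simp
      rw [hp']; simpa [heq] using p.2
    have h3 := key_forward_nat R 𝓔 e Mseq g hIter hB2 hB5 hB6 hg p' c i h2
    have h4 : (⟨(R.toEquiv ^ (i : ℤ)) (p' : M), h2⟩ : ↥(limitK 𝓔)) = p := by
      apply Subtype.ext
      show (R.toEquiv ^ (i : ℤ)) ((R.toEquiv ^ (-(i : ℤ))) (p : M)) = (p : M)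
      rw [← Equiv.Perm.mul_apply, ← zpow_add]; simp
    rw [h4] at h3
    calc (g.toEquiv ^ (-(i : ℤ))) (e (p, c))
        = (g.toEquiv ^ (-(i : ℤ))) ((g.toEquiv ^ (i : ℤ)) (e (p', c))) := by rw [h3]
      _ = e (p', c) := by rw [← Equiv.Perm.mul_apply, ← zpow_add]; simp

lemma key_not_mem
    (hIter : ∀ n, IterableColl R (𝓔 n) (n + 1))
    (hcomp : ∀ n, CompatibleFor R (𝓔 (n + 1)) (𝓔 n) (n + 1))
    (hB2 : HypB2 R 𝓔 Mseq) (hB5 : HypB5 R 𝓔 e Mseq)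
    (hg : TendstoUniformly (fun n => ⇑(gSeq R Mseq n)) (⇑g) Filter.atTop)
    (p : ↥(limitK 𝓔)) (c : C) (j : ℤ)
    (hj : (R.toEquiv ^ j) (p : M) ∉ limitK 𝓔) :
    (g.toEquiv ^ j) (e (p, c)) ∉ Set.range e := by
  rintro ⟨q', hq'⟩
  obtain ⟨m₀, hm₀⟩ : ∃ m₀, (R.toEquiv ^ j) (p : M) ∉ collUnion (𝓔 m₀) := by
    by_contra h
    push_neg at h
    exact hj (Set.mem_iInter.2 h)
  set n := max j.natAbs m₀ with hn
  have hjn : |j| ≤ (n : ℤ) := by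
    rw [hn]
    calc |j| = (j.natAbs : ℤ) := (Int.abs_eq_natAbs j)
    _ ≤ _ := by exact_mod_cast le_max_left _ _
  obtain ⟨X, hX, hp⟩ : ∃ X ∈ 𝓔 n, (p : M) ∈ X := by
    have : (p : M) ∈ collUnion (𝓔 n) := limitK_subset 𝓔 n p.2
    simpa [collUnion] using this
  obtain ⟨X', hX', hq1⟩ : ∃ X' ∈ 𝓔 n, (q'.1 : M) ∈ X' := by
    have : (q'.1 : M) ∈ collUnion (𝓔 n) := limitK_subset 𝓔 n q'.1.2
    simpa [collUnion] using this
  have hw : (Psi Mseq n) (e (p, c)) ∈ X := interior_subset (hB5 n X hX ⟨(p, c), hp, rfl⟩)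
  have hw' : (Psi Mseq n) (e q') ∈ X' := interior_subset (hB5 n X' hX' ⟨q', hq1, rfl⟩)
  have hval : (Psi Mseq n) (e q') = (R.toEquiv ^ j) ((Psi Mseq n) (e (p, c))) := by
    rw [hq', starEq R 𝓔 e Mseq g hB2 hB5 hg (p, c) j n hjn, gSeq_toEquiv_zpow]
    rw [Homeomorph.apply_symm_apply]
  have hmem1 : (Psi Mseq n) (e q') ∈ (R.toEquiv ^ j) '' X := ⟨_, hw, hval.symm⟩
  have hXX' : (R.toEquiv ^ j) '' X = X' := by
    rcases hIter n X hX X' hX' j 0 (le_trans hjn (by omega)) (by simp; omega)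
      with hdisj | heq
    · exact absurd (by simpa using hw') (Set.disjoint_left.1 hdisj hmem1)
    · simpa using heq
  have : (R.toEquiv ^ j) (p : M) ∈ collUnion (𝓔 m₀) := by
    apply collUnion_anti R 𝓔 hcomp (le_max_right j.natAbs m₀)
    exact ⟨X', hX', hXX' ▸ ⟨(p : M), hp, rfl⟩⟩
  exact hm₀ this

end KeyLemmas

end AuxLemmas

/-- Under hypotheses `A₁`, `A₂`, `A₃`, `B₁`, `B₂`, `B₃`, `B₅`, `B₆`, the
restriction of `g = lim gₙ` to `⋃ₙ gⁿ(K × C)` is isomorphic, as a measurable dynamical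
system, to the restriction of `R × Id` to `⋃ₙ Rⁿ(K) × C`. -/
theorem g_isomorphic_trivial_product (d : ℕ) (hd : 2 ≤ d) (M : Type*) [MetricSpace M]
    [CompactSpace M] [ChartedSpace (EuclideanSpace ℝ (Fin d)) M]
    [MeasurableSpace M] [BorelSpace M]
    (R : M ≃ₜ M) (𝓔 : ℕ → Set (Set M)) (hrect : ∀ n, IsRectCollection d (𝓔 n))
    (hA1 : HypA1 R 𝓔) (hA2 : HypA2 𝓔) (hA3 : HypA3 R 𝓔)
    (hEdge : EdgelessGraph R (𝓔 0)) (X₀ : Set M) (h𝓔0 : 𝓔 0 = {X₀})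
    (C : Type*) [TopologicalSpace C] [CompactSpace C] [TopologicalSpace.MetrizableSpace C]
    [TotallyDisconnectedSpace C] [Nonempty C] (hCperf : Perfect (Set.univ : Set C))
    [MeasurableSpace C] [BorelSpace C]
    (e : ↥(limitK 𝓔) × C → M) (he : Continuous e) (heInj : Function.Injective e)
    (heRange : Set.range e ⊆ interior X₀) (heTame : TamelyEmbedded d (Set.range e))
    (Mseq : ℕ → M ≃ₜ M)
    (hB1 : HypB1 R 𝓔 Mseq) (hB2 : HypB2 R 𝓔 Mseq) (hB3 : HypB3 R 𝓔 Mseq)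
    (hB5 : HypB5 R 𝓔 e Mseq) (hB6 : HypB6 R 𝓔 e Mseq)
    (g : M ≃ₜ M)
    (hg : TendstoUniformly (fun n => ⇑(gSeq R Mseq n)) (⇑g) Filter.atTop) :
    MeasIsoOn (⇑g) (⋃ n : ℤ, (g.toEquiv ^ n) '' Set.range e)
      (fun p : M × C => (R p.1, p.2))
      ((⋃ n : ℤ, (R.toEquiv ^ n) '' limitK 𝓔) ×ˢ (Set.univ : Set C)) := by
  classical
  haveI : SecondCountableTopology C := by
    letI := TopologicalSpace.metrizableSpaceMetric C
    infer_instance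
  have hKcomp : IsCompact (limitK 𝓔) := isCompact_limitK hrect
  haveI : CompactSpace ↥(limitK 𝓔) := isCompact_iff_compactSpace.1 hKcomp
  have hIter : ∀ n, IterableColl R (𝓔 n) (n + 1) := fun n => (hA1.1 n).1
  have hcomp : ∀ n, CompatibleFor R (𝓔 (n + 1)) (𝓔 n) (n + 1) := hA1.2.2
  have hL := key_forward R 𝓔 e Mseq g hIter hB2 hB5 hB6 hg
  have hC := key_not_mem R 𝓔 e Mseq g hIter hcomp hB2 hB5 hg
  set φ : ℤ → ↥(limitK 𝓔) × C → M := fun n q => (g.toEquiv ^ n) (e q) with hφdef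
  set ψ : ℤ → ↥(limitK 𝓔) × C → M × C :=
    fun n q => ((R.toEquiv ^ n) (q.1 : M), q.2) with hψdef
  have hW : ∀ (n n' : ℤ) (q q' : ↥(limitK 𝓔) × C), φ n q = φ n' q' → ψ n q = ψ n' q' := by
    intro n n' q q' h
    have h1 : (g.toEquiv ^ (n - n')) (e q) = e q' := by
      apply (g.toEquiv ^ n').injective
      rw [← Equiv.Perm.mul_apply, ← zpow_add, show n' + (n - n') = n by ring]
      exact h
    have hmem : (R.toEquiv ^ (n - n')) (q.1 : M) ∈ limitK 𝓔 := by
      by_contra hcon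
      exact hC q.1 q.2 (n - n') hcon ⟨q', h1.symm⟩
    have h3 := hL q.1 q.2 (n - n') hmem
    have h4 : q' = (⟨(R.toEquiv ^ (n - n')) (q.1 : M), hmem⟩, q.2) := heInj (by
      rw [← h1]; exact h3)
    have h5 : (R.toEquiv ^ n') (q'.1 : M) = (R.toEquiv ^ n) (q.1 : M) := by
      rw [h4]
      show (R.toEquiv ^ n') ((R.toEquiv ^ (n - n')) (q.1 : M)) = _
      rw [← Equiv.Perm.mul_apply, ← zpow_add, show n' + (n - n') = n by ring]
    have h6 : q'.2 = q.2 := by rw [h4]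
    show ((R.toEquiv ^ n) (q.1 : M), q.2) = ((R.toEquiv ^ n') (q'.1 : M), q'.2)
    rw [h5, h6]
  set Θ : M → M × C := fun y =>
    if h : ∃ z : ℤ × (↥(limitK 𝓔) × C), φ z.1 z.2 = y then ψ h.choose.1 h.choose.2
    else (y, Classical.arbitrary C) with hΘdef
  have hΘ : ∀ (n : ℤ) (q : ↥(limitK 𝓔) × C), Θ (φ n q) = ψ n q := by
    intro n q
    have hex : ∃ z : ℤ × (↥(limitK 𝓔) × C), φ z.1 z.2 = φ n q := ⟨(n, q), rfl⟩
    simp only [hΘdef, dif_pos hex]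
    exact hW _ _ _ _ hex.choose_spec
  have hmemA : ∀ y, y ∈ (⋃ n : ℤ, (g.toEquiv ^ n) '' Set.range e)
      ↔ ∃ (n : ℤ) (q : ↥(limitK 𝓔) × C), φ n q = y := by
    intro y
    simp only [Set.mem_iUnion, Set.mem_image, Set.mem_range]
    constructor
    · rintro ⟨n, x, ⟨q, rfl⟩, rfl⟩
      exact ⟨n, q, rfl⟩
    · rintro ⟨n, q, rfl⟩
      exact ⟨n, e q, ⟨q, rfl⟩, rfl⟩
  have hEcomp : IsCompact (Set.range e) := isCompact_range he
  have hmeasA : MeasurableSet (⋃ n : ℤ, (g.toEquiv ^ n) '' Set.range e) :=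
    MeasurableSet.iUnion fun n =>
      ((hEcomp.image (continuous_homeo_zpow g n)).isClosed).measurableSet
  have hmeasB : MeasurableSet ((⋃ n : ℤ, (R.toEquiv ^ n) '' limitK 𝓔) ×ˢ
      (Set.univ : Set C)) :=
    (MeasurableSet.iUnion fun n =>
      ((hKcomp.image (continuous_homeo_zpow R n)).isClosed).measurableSet).prod
      MeasurableSet.univ
  have hsurj1 : Function.Surjective (fun n : ℤ => n + 1) := fun n => ⟨n - 1, by ring⟩
  have hInvA : ⇑g '' (⋃ n : ℤ, (g.toEquiv ^ n) '' Set.range e)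
      = ⋃ n : ℤ, (g.toEquiv ^ n) '' Set.range e := by
    rw [Set.image_iUnion]
    have h1 : ∀ n : ℤ, ⇑g '' ((g.toEquiv ^ n) '' Set.range e)
        = (g.toEquiv ^ (n + 1)) '' Set.range e := by
      intro n
      rw [← Set.image_comp]
      apply Set.image_congr
      intro x _
      exact (zpow_apply_succ g n x).symm
    simp only [h1]
    exact hsurj1.iUnion_comp fun n => (g.toEquiv ^ n) '' Set.range e
  have hInvSK : ⇑R '' (⋃ n : ℤ, (R.toEquiv ^ n) '' limitK 𝓔)
      = ⋃ n : ℤ, (R.toEquiv ^ n) '' limitK 𝓔 := by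
    rw [Set.image_iUnion]
    have h1 : ∀ n : ℤ, ⇑R '' ((R.toEquiv ^ n) '' limitK 𝓔)
        = (R.toEquiv ^ (n + 1)) '' limitK 𝓔 := by
      intro n
      rw [← Set.image_comp]
      apply Set.image_congr
      intro x _
      exact (zpow_apply_succ R n x).symm
    simp only [h1]
    exact hsurj1.iUnion_comp fun n => (R.toEquiv ^ n) '' limitK 𝓔
  have hInvB : (fun p : M × C => (R p.1, p.2)) ''
      ((⋃ n : ℤ, (R.toEquiv ^ n) '' limitK 𝓔) ×ˢ (Set.univ : Set C))
      = (⋃ n : ℤ, (R.toEquiv ^ n) '' limitK 𝓔) ×ˢ (Set.univ : Set C) := by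
    ext z
    constructor
    · rintro ⟨⟨u, v⟩, ⟨hu, -⟩, rfl⟩
      exact ⟨by rw [← hInvSK]; exact ⟨u, hu, rfl⟩, trivial⟩
    · rintro ⟨ha, -⟩
      rw [← hInvSK] at ha
      obtain ⟨u, hu, huz⟩ := ha
      exact ⟨(u, z.2), ⟨hu, trivial⟩, Prod.ext huz rfl⟩
  have hφcont : ∀ n : ℤ, Continuous (φ n) := fun n => (continuous_homeo_zpow g n).comp he
  have hφinj : ∀ n : ℤ, Function.Injective (φ n) :=
    fun n => ((g.toEquiv ^ n).injective).comp heInj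
  have hφemb : ∀ n : ℤ, MeasurableEmbedding (φ n) := fun n =>
    ((hφcont n).isClosedEmbedding (hφinj n)).measurableEmbedding
  have hψcont : ∀ n : ℤ, Continuous (ψ n) := fun n =>
    (((continuous_homeo_zpow R n).comp continuous_subtype_val).comp continuous_fst).prodMk
      continuous_snd
  have hψinj : ∀ n : ℤ, Function.Injective (ψ n) := by
    intro n q q' h
    simp only [hψdef] at h
    have h12 := Prod.ext_iff.1 h
    exact Prod.ext (Subtype.ext ((R.toEquiv ^ n).injective h12.1)) h12.2
  have hψemb : ∀ n : ℤ, MeasurableEmbedding (ψ n) := fun n =>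
    ((hψcont n).isClosedEmbedding (hψinj n)).measurableEmbedding
  have hMaps : Set.MapsTo Θ (⋃ n : ℤ, (g.toEquiv ^ n) '' Set.range e)
      ((⋃ n : ℤ, (R.toEquiv ^ n) '' limitK 𝓔) ×ˢ (Set.univ : Set C)) := by
    intro y hy
    obtain ⟨n, q, rfl⟩ := (hmemA y).1 hy
    rw [hΘ n q]
    exact ⟨Set.mem_iUnion.2 ⟨n, (q.1 : M), q.1.2, rfl⟩, trivial⟩
  have hInjOn : Set.InjOn Θ (⋃ n : ℤ, (g.toEquiv ^ n) '' Set.range e) := by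
    intro y hy y' hy' hee
    obtain ⟨n, q, rfl⟩ := (hmemA y).1 hy
    obtain ⟨n', q', rfl⟩ := (hmemA y').1 hy'
    rw [hΘ, hΘ] at hee
    simp only [hψdef] at hee
    have h5 : (R.toEquiv ^ n) (q.1 : M) = (R.toEquiv ^ n') (q'.1 : M) :=
      (Prod.ext_iff.1 hee).1
    have h6 : q.2 = q'.2 := (Prod.ext_iff.1 hee).2
    have hval : (R.toEquiv ^ (n - n')) (q.1 : M) = (q'.1 : M) := by
      apply (R.toEquiv ^ n').injective
      rw [← Equiv.Perm.mul_apply, ← zpow_add, show n' + (n - n') = n by ring]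
      exact h5
    have hmm : (R.toEquiv ^ (n - n')) (q.1 : M) ∈ limitK 𝓔 := by
      rw [hval]; exact q'.1.2
    have h3 := hL q.1 q.2 (n - n') hmm
    have h7 : e q' = (g.toEquiv ^ (n - n')) (e q) := by
      rw [h3]
      congr 1
      exact Prod.ext (Subtype.ext hval.symm) h6.symm
    show φ n q = φ n' q'
    simp only [hφdef]
    rw [h7, ← Equiv.Perm.mul_apply, ← zpow_add, show n' + (n - n') = n by ring]
  have hSurj : Set.SurjOn Θ (⋃ n : ℤ, (g.toEquiv ^ n) '' Set.range e)
      ((⋃ n : ℤ, (R.toEquiv ^ n) '' limitK 𝓔) ×ˢ (Set.univ : Set C)) := by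
    rintro ⟨a, b⟩ ⟨ha, -⟩
    obtain ⟨n, ham⟩ := Set.mem_iUnion.1 ha
    obtain ⟨x, hx, rfl⟩ := ham
    exact ⟨φ n (⟨x, hx⟩, b), (hmemA _).2 ⟨n, (⟨x, hx⟩, b), rfl⟩, hΘ n (⟨x, hx⟩, b)⟩
  have hmeas1 : ∀ V : Set (M × C), MeasurableSet V →
      MeasurableSet ((⋃ n : ℤ, (g.toEquiv ^ n) '' Set.range e) ∩ Θ ⁻¹' V) := by
    intro V hV
    have hset : (⋃ n : ℤ, (g.toEquiv ^ n) '' Set.range e) ∩ Θ ⁻¹' V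
        = ⋃ n : ℤ, (φ n) '' ((ψ n) ⁻¹' V) := by
      ext y
      constructor
      · rintro ⟨hyA, hyV⟩
        obtain ⟨n, q, rfl⟩ := (hmemA y).1 hyA
        refine Set.mem_iUnion.2 ⟨n, q, ?_, rfl⟩
        rw [Set.mem_preimage, ← hΘ n q]
        exact hyV
      · intro hy
        obtain ⟨n, q, hq, rfl⟩ := Set.mem_iUnion.1 hy
        refine ⟨(hmemA _).2 ⟨n, q, rfl⟩, ?_⟩
        rw [Set.mem_preimage, hΘ n q]
        exact hq
    rw [hset]
    exact MeasurableSet.iUnion fun n =>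
      (hφemb n).measurableSet_image.2 ((hψcont n).measurable hV)
  have hmeas2 : ∀ U : Set M, MeasurableSet U →
      MeasurableSet (Θ '' ((⋃ n : ℤ, (g.toEquiv ^ n) '' Set.range e) ∩ U)) := by
    intro U hU
    have hset : Θ '' ((⋃ n : ℤ, (g.toEquiv ^ n) '' Set.range e) ∩ U)
        = ⋃ n : ℤ, (ψ n) '' ((φ n) ⁻¹' U) := by
      ext z
      constructor
      · rintro ⟨y, ⟨hyA, hyU⟩, rfl⟩
        obtain ⟨n, q, rfl⟩ := (hmemA y).1 hyA
        exact Set.mem_iUnion.2 ⟨n, q, hyU, (hΘ n q).symm⟩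
      · intro hz
        obtain ⟨n, q, hqU, rfl⟩ := Set.mem_iUnion.1 hz
        exact ⟨φ n q, ⟨(hmemA _).2 ⟨n, q, rfl⟩, hqU⟩, hΘ n q⟩
    rw [hset]
    exact MeasurableSet.iUnion fun n =>
      (hψemb n).measurableSet_image.2 ((hφcont n).measurable hU)
  have hconj : ∀ y ∈ (⋃ n : ℤ, (g.toEquiv ^ n) '' Set.range e),
      Θ (g y) = (fun p : M × C => (R p.1, p.2)) (Θ y) := by
    intro y hy
    obtain ⟨n, q, rfl⟩ := (hmemA y).1 hy
    have h1 : g (φ n q) = φ (n + 1) q := (zpow_apply_succ g n (e q)).symm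
    rw [h1, hΘ, hΘ]
    show ((R.toEquiv ^ (n + 1)) (q.1 : M), q.2) = (R ((R.toEquiv ^ n) (q.1 : M)), q.2)
    rw [zpow_apply_succ]
  exact ⟨⋃ n : ℤ, (g.toEquiv ^ n) '' Set.range e,
    (⋃ n : ℤ, (R.toEquiv ^ n) '' limitK 𝓔) ×ˢ (Set.univ : Set C), Θ,
    subset_rfl, subset_rfl, hmeasA, hmeasB, hInvA, hInvB,
    fun μ _ _ hμ => hμ, fun ν _ _ hν => hν, ⟨hMaps, hInjOn, hSurj⟩, hmeas1, hmeas2, hconj⟩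


end
end
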